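/- arXiv:1406.0989 — 2 statements merged into one kernel-verified Lean document; each statement's English description precedes it below -/
import Mathlib

section
/- Let p > 1, ℓ ∈ (0,∞), and k ∈ K_ℓ with K(s) = ∫₀ˢ k(θ) dθ. Let f ∈ C¹([0,∞)) satisfy f(0) = 0, f'(u) > 0 for u > 0, and f ∈ RV_ρ with ρ > max{1, p−1, p−1−(p−2)/ℓ}. Set r = (ρ+1)/(ρ+1−p), F(t) = ∫₀ᵗ f(s) ds, p' = p/(p−1), and let φ : (0,∞) → (0,∞) be defined by ∫_{φ(t)}^∞ ds/(p'F(s))^{1/p} = t. Then for any constant ς with p(1−ℓ)/(r−1) < ς < ρ−1, one has lim_{s→0⁺} φ(K(s))^{−ς}/k(s)^p = 0. -/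
open Filter MeasureTheory Set Topology

noncomputable section

open Real

/-- `f` is regularly varying at infinity of index `ρ`. -/
def IsRV (f : ℝ → ℝ) (ρ : ℝ) : Prop :=
  ∀ ξ : ℝ, 0 < ξ → Tendsto (fun u => f (ξ * u) / f u) atTop (𝓝 (ξ ^ ρ))

/-- `k ∈ K_ℓ`: `k` is a positive monotonic function in `C¹((0,μ)) ∩ L¹((0,μ))`
such that `(K/k)'(s) → ℓ` as `s → 0⁺`, where `K(s) = ∫₀ˢ k(θ) dθ`. -/
def memK (ℓ μ : ℝ) (k : ℝ → ℝ) : Prop :=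
  (∀ s ∈ Ioo (0:ℝ) μ, 0 < k s) ∧
  (MonotoneOn k (Ioo (0:ℝ) μ) ∨ AntitoneOn k (Ioo (0:ℝ) μ)) ∧
  ContDiffOn ℝ 1 k (Ioo (0:ℝ) μ) ∧
  IntegrableOn k (Ioo (0:ℝ) μ) ∧
  Tendsto (deriv fun s => (∫ θ in (0:ℝ)..s, k θ) / k s) (𝓝[>] (0:ℝ)) (𝓝 ℓ)

private lemma rpow_le_add_aux {x m M e : ℝ} (hm : 0 < m) (h1 : m ≤ x) (h2 : x ≤ M) :
    x ^ e ≤ m ^ e + M ^ e := by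
  rcases le_or_gt 0 e with he | he
  · have h := Real.rpow_le_rpow (hm.le.trans h1) h2 he
    have h0 : 0 ≤ m ^ e := Real.rpow_nonneg hm.le e
    linarith
  · have h := Real.rpow_le_rpow_of_nonpos hm h1 he.le
    have h0 : 0 ≤ M ^ e := Real.rpow_nonneg ((hm.trans_le h1).trans_le h2).le e
    linarith

private lemma exists_pow_bounds {f : ℝ → ℝ} {ρ ε : ℝ} (hε : 0 < ε) (hερ : ε < ρ)
    (hmono : MonotoneOn f (Ici 0)) (hpos : ∀ x : ℝ, 0 < x → 0 < f x)
    (h2 : Tendsto (fun u => f (2 * u) / f u) atTop (𝓝 ((2:ℝ) ^ ρ))) :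
    ∃ U c C : ℝ, 1 ≤ U ∧ 0 < c ∧ 0 < C ∧
      ∀ x : ℝ, U ≤ x → c * x ^ (ρ - ε) ≤ f x ∧ f x ≤ C * x ^ (ρ + ε) := by
  have h2lt : (2:ℝ) ^ (ρ - ε) < 2 ^ ρ :=
    Real.rpow_lt_rpow_of_exponent_lt one_lt_two (by linarith)
  have h2gt : (2:ℝ) ^ ρ < 2 ^ (ρ + ε) :=
    Real.rpow_lt_rpow_of_exponent_lt one_lt_two (by linarith)
  obtain ⟨U₀, hU₀⟩ := eventually_atTop.1 (h2.eventually (Ioo_mem_nhds h2lt h2gt))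
  set U := max U₀ 1 with hUdef
  have hU1 : (1:ℝ) ≤ U := le_max_right _ _
  have hUpos : (0:ℝ) < U := lt_of_lt_of_le one_pos hU1
  have hfU : 0 < f U := hpos U hUpos
  have ratio : ∀ u : ℝ, U ≤ u →
      (2:ℝ) ^ (ρ - ε) * f u ≤ f (2 * u) ∧ f (2 * u) ≤ (2:ℝ) ^ (ρ + ε) * f u := by
    intro u hu
    have hupos : 0 < u := lt_of_lt_of_le hUpos hu
    have hfu : 0 < f u := hpos u hupos
    have h := hU₀ u (le_trans (le_max_left _ _) hu)
    constructor
    · have := h.1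
      rw [lt_div_iff₀ hfu] at this
      linarith
    · have := h.2
      rw [div_lt_iff₀ hfu] at this
      linarith
  have hUmem : ∀ n : ℕ, U ≤ 2 ^ n * U := by
    intro n
    nlinarith [one_le_pow₀ (one_le_two (α := ℝ)) (n := n)]
  have low : ∀ n : ℕ, (2:ℝ) ^ ((ρ - ε) * n) * f U ≤ f (2 ^ n * U) := by
    intro n
    induction n with
    | zero => simp
    | succ n ih =>
      have h1 := (ratio (2 ^ n * U) (hUmem n)).1
      have heq : (2:ℝ) ^ ((ρ - ε) * (n + 1 : ℕ)) = 2 ^ (ρ - ε) * 2 ^ ((ρ - ε) * n) := by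
        rw [← Real.rpow_add two_pos]
        push_cast
        ring_nf
      have heq2 : (2:ℝ) ^ (n + 1) * U = 2 * (2 ^ n * U) := by ring
      rw [heq, heq2, mul_assoc]
      refine le_trans ?_ h1
      have h2e : (0:ℝ) ≤ 2 ^ (ρ - ε) := Real.rpow_nonneg (by norm_num) _
      exact mul_le_mul_of_nonneg_left ih h2e
  have high : ∀ n : ℕ, f (2 ^ n * U) ≤ (2:ℝ) ^ ((ρ + ε) * n) * f U := by
    intro n
    induction n with
    | zero => simp
    | succ n ih =>
      have h1 := (ratio (2 ^ n * U) (hUmem n)).2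
      have heq : (2:ℝ) ^ ((ρ + ε) * (n + 1 : ℕ)) = 2 ^ (ρ + ε) * 2 ^ ((ρ + ε) * n) := by
        rw [← Real.rpow_add two_pos]
        push_cast
        ring_nf
      have heq2 : (2:ℝ) ^ (n + 1) * U = 2 * (2 ^ n * U) := by ring
      rw [heq, heq2, mul_assoc]
      refine le_trans h1 ?_
      have h2e : (0:ℝ) ≤ 2 ^ (ρ + ε) := Real.rpow_nonneg (by norm_num) _
      exact mul_le_mul_of_nonneg_left ih h2e
  refine ⟨U, f U * (2 * U) ^ (-(ρ - ε)), f U * (2 / U) ^ (ρ + ε), hU1,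
    mul_pos hfU (Real.rpow_pos_of_pos (by linarith) _),
    mul_pos hfU (Real.rpow_pos_of_pos (by positivity) _), ?_⟩
  intro x hx
  have hxpos : 0 < x := lt_of_lt_of_le hUpos hx
  have hy1 : (1:ℝ) ≤ x / U := (one_le_div hUpos).2 hx
  have hypos : 0 < x / U := lt_of_lt_of_le one_pos hy1
  set n : ℕ := ⌊Real.logb 2 (x / U)⌋₊ with hn
  have hlb0 : 0 ≤ Real.logb 2 (x / U) := Real.logb_nonneg one_lt_two hy1
  have h2n : (2:ℝ) ^ (n:ℝ) ≤ x / U := by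
    have := Nat.floor_le hlb0
    calc (2:ℝ) ^ (n:ℝ) ≤ 2 ^ Real.logb 2 (x / U) :=
          Real.rpow_le_rpow_of_exponent_le one_le_two this
    _ = x / U := Real.rpow_logb two_pos (by norm_num) hypos
  have h2n' : x / U < (2:ℝ) ^ ((n:ℝ) + 1) := by
    have := Nat.lt_floor_add_one (Real.logb 2 (x / U))
    calc x / U = 2 ^ Real.logb 2 (x / U) := (Real.rpow_logb two_pos (by norm_num) hypos).symm
    _ < 2 ^ ((n:ℝ) + 1) := Real.rpow_lt_rpow_of_exponent_lt one_lt_two (by exact_mod_cast this)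
  have hnat : ∀ m : ℕ, (2:ℝ) ^ (m:ℝ) = 2 ^ m := fun m => Real.rpow_natCast 2 m
  have hx1 : (2:ℝ) ^ n * U ≤ x := by
    rw [← hnat]
    rw [le_div_iff₀ hUpos] at h2n
    linarith
  have hx2 : x < (2:ℝ) ^ (n + 1) * U := by
    have : ((n:ℝ) + 1) = ((n + 1 : ℕ) : ℝ) := by push_cast; ring
    rw [this, hnat] at h2n'
    rw [div_lt_iff₀ hUpos] at h2n'
    linarith
  constructor
  · have hm := hmono (mem_Ici.2 (by positivity : (0:ℝ) ≤ 2 ^ n * U)) (mem_Ici.2 hxpos.le) hx1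
    have hl := low n
    have hkey : f U * (2 * U) ^ (-(ρ - ε)) * x ^ (ρ - ε) ≤ (2:ℝ) ^ ((ρ - ε) * n) * f U := by
      have hxle : x / (2 * U) ≤ (2:ℝ) ^ (n:ℝ) := by
        rw [div_le_iff₀ (by linarith)]
        rw [hnat]
        have hps : (2:ℝ) ^ (n+1) = 2 ^ n * 2 := pow_succ 2 n
        nlinarith [hx2, (by positivity : (0:ℝ) < (2:ℝ)^n)]
      have h1 : (x / (2 * U)) ^ (ρ - ε) ≤ ((2:ℝ) ^ (n:ℝ)) ^ (ρ - ε) :=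
        Real.rpow_le_rpow (by positivity) hxle (by linarith)
      have h2 : ((2:ℝ) ^ (n:ℝ)) ^ (ρ - ε) = (2:ℝ) ^ ((ρ - ε) * n) := by
        rw [← Real.rpow_mul (by norm_num)]
        ring_nf
      have h3 : (x / (2 * U)) ^ (ρ - ε) = x ^ (ρ - ε) * (2 * U) ^ (-(ρ - ε)) := by
        rw [Real.div_rpow hxpos.le (by linarith), Real.rpow_neg (by linarith), div_eq_mul_inv]
      rw [h3, h2] at h1
      nlinarith [h1, hfU]
    calc f U * (2 * U) ^ (-(ρ - ε)) * x ^ (ρ - ε) ≤ (2:ℝ) ^ ((ρ - ε) * n) * f U := hkey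
    _ ≤ f (2 ^ n * U) := hl
    _ ≤ f x := hm
  · have hm := hmono (mem_Ici.2 hxpos.le) (mem_Ici.2 (by positivity : (0:ℝ) ≤ 2 ^ (n+1) * U)) hx2.le
    have hh := high (n + 1)
    have hkey : (2:ℝ) ^ ((ρ + ε) * (n + 1 : ℕ)) * f U ≤ f U * (2 / U) ^ (ρ + ε) * x ^ (ρ + ε) := by
      have h2le : (2:ℝ) ^ ((n:ℝ) + 1) ≤ 2 * (x / U) := by
        have : (2:ℝ) ^ ((n:ℝ) + 1) = 2 * 2 ^ (n:ℝ) := by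
          rw [Real.rpow_add two_pos, Real.rpow_one]; ring
        rw [this]
        nlinarith [h2n]
      have h1 : ((2:ℝ) ^ ((n:ℝ) + 1)) ^ (ρ + ε) ≤ (2 * (x / U)) ^ (ρ + ε) :=
        Real.rpow_le_rpow (by positivity) h2le (by linarith)
      have h2 : ((2:ℝ) ^ ((n:ℝ) + 1)) ^ (ρ + ε) = (2:ℝ) ^ ((ρ + ε) * (n + 1 : ℕ)) := by
        rw [← Real.rpow_mul (by norm_num)]
        push_cast
        ring_nf
      have h3 : (2 * (x / U)) ^ (ρ + ε) = (2 / U) ^ (ρ + ε) * x ^ (ρ + ε) := by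
        rw [← Real.mul_rpow (by positivity) hxpos.le]
        congr 1
        field_simp
      rw [h2, h3] at h1
      nlinarith [h1, hfU]
    calc f x ≤ f (2 ^ (n+1) * U) := hm
    _ ≤ (2:ℝ) ^ ((ρ + ε) * (n + 1 : ℕ)) * f U := hh
    _ ≤ f U * (2 / U) ^ (ρ + ε) * x ^ (ρ + ε) := hkey

private lemma contAux {A B : ℝ} (c C s₁ s₂ : ℝ) (hA : A ≠ 0) (hB : B ≠ 0) :
    ContinuousAt (fun e : ℝ => C + (c / (A + s₁ * e) - C) / (B + s₂ * e)) 0 := by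
  have h1 : ContinuousAt (fun e : ℝ => A + s₁ * e) 0 := by fun_prop
  have h2 : ContinuousAt (fun e : ℝ => B + s₂ * e) 0 := by fun_prop
  have hA0 : A + s₁ * 0 ≠ 0 := by simpa using hA
  have hB0 : B + s₂ * 0 ≠ 0 := by simpa using hB
  exact continuousAt_const.add (((continuousAt_const.div h1 hA0).sub continuousAt_const).div h2 hB0)

private lemma evPos {f : ℝ → ℝ} (hf : ContinuousAt f 0) (h0 : 0 < f 0) :
    ∀ᶠ e in 𝓝[>] (0:ℝ), 0 < f e :=
  (hf.tendsto.eventually (eventually_gt_nhds h0)).filter_mono nhdsWithin_le_nhds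

private lemma exists_eps (p ℓ ρ ς : ℝ) (hp : 1 < p) (hℓ : 0 < ℓ) (hρ1 : 1 < ρ) (hρp : p - 1 < ρ)
    (hς1' : (1 - ℓ) * (ρ + 1 - p) < ς) :
    ∃ e : ℝ, 0 < e ∧ e < ℓ ∧ e < 1 ∧ e < ρ + 1 - p ∧
      (0 < p + (ς * p / (ρ + 1 - p + e) - p) / (ℓ - e)) ∧
      (0 < p + (ς * p / (ρ + 1 - p + e) - p) / (ℓ + e)) ∧
      (0 < p + (ς * p / (ρ + 1 - p - e) - p) / (ℓ - e)) ∧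
      (0 < p + (ς * p / (ρ + 1 - p - e) - p) / (ℓ + e)) := by
  have hA : 0 < ρ + 1 - p := by linarith
  have hγ0 : 0 < p + (ς * p / (ρ + 1 - p) - p) / ℓ := by
    have h1 : p * (1 - ℓ) < ς * p / (ρ + 1 - p) := by
      rw [lt_div_iff₀ hA]; nlinarith
    have h3 : (p * (1 - ℓ) - p) / ℓ = -p := by field_simp; ring
    have h4 : (p * (1 - ℓ) - p) / ℓ < (ς * p / (ρ + 1 - p) - p) / ℓ := by
      gcongr
    linarith
  have base : ∀ s₁ s₂ : ℝ, s₁ = 1 ∨ s₁ = -1 → s₂ = 1 ∨ s₂ = -1 →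
      ∀ᶠ e in 𝓝[>] (0:ℝ), 0 < p + (ς * p / (ρ + 1 - p + s₁ * e) - p) / (ℓ + s₂ * e) := by
    intro s₁ s₂ _ _
    apply evPos (contAux (ς * p) p s₁ s₂ hA.ne' hℓ.ne')
    simpa using hγ0
  have e1 := base 1 1 (Or.inl rfl) (Or.inl rfl)
  have e2 := base 1 (-1) (Or.inl rfl) (Or.inr rfl)
  have e3 := base (-1) 1 (Or.inr rfl) (Or.inl rfl)
  have e4 := base (-1) (-1) (Or.inr rfl) (Or.inr rfl)
  have e5 : ∀ᶠ e in 𝓝[>] (0:ℝ), e < ℓ ∧ e < 1 ∧ e < ρ + 1 - p := by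
    have : Ioo (0:ℝ) (min ℓ (min 1 (ρ + 1 - p))) ∈ 𝓝[>] (0:ℝ) :=
      Ioo_mem_nhdsGT_of_mem ⟨le_refl _, by positivity⟩
    filter_upwards [this] with e he
    exact ⟨lt_of_lt_of_le he.2 (min_le_left _ _),
      lt_of_lt_of_le he.2 ((min_le_right _ _).trans (min_le_left _ _)),
      lt_of_lt_of_le he.2 ((min_le_right _ _).trans (min_le_right _ _))⟩
  have e0 : ∀ᶠ e in 𝓝[>] (0:ℝ), 0 < e := self_mem_nhdsWithin
  obtain ⟨e, ⟨h1, h2, h3, h4, h5a, h5b, h5c⟩, h0⟩ :=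
    ((e1.and (e2.and (e3.and (e4.and e5)))).and e0).exists
  refine ⟨e, h0, h5a, h5b, h5c, ?_, ?_, ?_, ?_⟩
  · simpa [one_mul, neg_one_mul, ← sub_eq_add_neg] using h2
  · simpa [one_mul] using h1
  · simpa [one_mul, neg_one_mul, ← sub_eq_add_neg] using h4
  · simpa [one_mul, neg_one_mul, ← sub_eq_add_neg] using h3

private lemma exp_combo {Kd d s b : ℝ} (hK : 0 < Kd) (hd : 0 < d) (hs : 0 < s) :
    Real.exp (Real.log Kd + b * Real.log s - b * Real.log d) = Kd * d ^ (-b) * s ^ b := by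
  rw [Real.rpow_def_of_pos hs, Real.rpow_def_of_pos hd, Real.exp_sub, Real.exp_add,
    Real.exp_log hK, mul_neg, Real.exp_neg, mul_comm (Real.log s) b, mul_comm (Real.log d) b]
  ring

private lemma K_bounds (ℓ μ : ℝ) (hℓ : 0 < ℓ) (hμ : 0 < μ) (k : ℝ → ℝ)
    (hkpos : ∀ s ∈ Ioo (0:ℝ) μ, 0 < k s)
    (hkC1 : ContDiffOn ℝ 1 k (Ioo (0:ℝ) μ))
    (hkint : IntegrableOn k (Ioo (0:ℝ) μ))
    (hkd : Tendsto (deriv fun s => (∫ θ in (0:ℝ)..s, k θ) / k s) (𝓝[>] (0:ℝ)) (𝓝 ℓ))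
    (e : ℝ) (he : 0 < e) (heℓ : e < ℓ) :
    ∃ δ cK CK : ℝ, 0 < δ ∧ δ < μ ∧ 0 < cK ∧ 0 < CK ∧
      ∀ s ∈ Ioo (0:ℝ) δ,
        0 < (∫ θ in (0:ℝ)..s, k θ) ∧
        cK * s ^ (1/(ℓ - e)) ≤ (∫ θ in (0:ℝ)..s, k θ) ∧
        (∫ θ in (0:ℝ)..s, k θ) ≤ CK * s ^ (1/(ℓ + e)) ∧
        (∫ θ in (0:ℝ)..s, k θ) / ((ℓ + e) * s) ≤ k s := by
  set Kf : ℝ → ℝ := fun s => ∫ θ in (0:ℝ)..s, k θ with hKfdef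
  set h : ℝ → ℝ := fun s => Kf s / k s with hhdef
  have hkd' : Tendsto (deriv h) (𝓝[>] (0:ℝ)) (𝓝 ℓ) := hkd
  -- interval integrability
  have hkii : ∀ s ∈ Ioo (0:ℝ) μ, IntervalIntegrable k volume 0 s := by
    intro s hs
    rw [intervalIntegrable_iff_integrableOn_Ioc_of_le hs.1.le]
    exact hkint.mono_set (fun x hx => ⟨hx.1, lt_of_le_of_lt hx.2 hs.2⟩)
  -- FTC: derivative of Kf
  have hKd : ∀ s ∈ Ioo (0:ℝ) μ, HasDerivAt Kf (k s) s := by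
    intro s hs
    have hc : ContinuousAt k s := (hkC1.continuousOn.continuousAt (Ioo_mem_nhds hs.1 hs.2))
    exact intervalIntegral.integral_hasDerivAt_right (hkii s hs)
      (ContinuousOn.stronglyMeasurableAtFilter isOpen_Ioo hkC1.continuousOn s hs) hc
  have hKpos : ∀ s ∈ Ioo (0:ℝ) μ, 0 < Kf s := by
    intro s hs
    exact intervalIntegral.intervalIntegral_pos_of_pos_on (hkii s hs)
      (fun x hx => hkpos x ⟨hx.1, lt_trans hx.2 hs.2⟩) hs.1
  -- Kf tends to 0
  have hK0 : Tendsto Kf (𝓝[>] (0:ℝ)) (𝓝 0) := by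
    have hμ2 : μ/2 ∈ Ioo (0:ℝ) μ := ⟨by linarith, by linarith⟩
    have hcont : ContinuousOn Kf (uIcc (0:ℝ) (μ/2)) :=
      intervalIntegral.continuousOn_primitive_interval' (hkii _ hμ2) left_mem_uIcc
    have h0 : Kf 0 = 0 := intervalIntegral.integral_same
    have hcw : ContinuousWithinAt Kf (uIcc (0:ℝ) (μ/2)) 0 :=
      hcont 0 left_mem_uIcc
    have huicc : uIcc (0:ℝ) (μ/2) = Icc (0:ℝ) (μ/2) := uIcc_of_le (by linarith)
    have hle : 𝓝[>] (0:ℝ) ≤ 𝓝[Icc (0:ℝ) (μ/2)] (0:ℝ) := by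
      rw [← nhdsWithin_Ioo_eq_nhdsGT (by linarith : (0:ℝ) < μ/2)]
      exact nhdsWithin_mono _ Ioo_subset_Icc_self
    have := hcw.tendsto
    rw [h0, huicc] at this
    exact this.mono_left hle
  have hkdiff : ∀ s ∈ Ioo (0:ℝ) μ, DifferentiableAt ℝ k s := by
    intro s hs
    exact (hkC1.differentiableOn one_ne_zero).differentiableAt (Ioo_mem_nhds hs.1 hs.2)
  have hhdiff : ∀ s ∈ Ioo (0:ℝ) μ, DifferentiableAt ℝ h s := by
    intro s hs
    exact ((hKd s hs).differentiableAt.div (hkdiff s hs) (hkpos s hs).ne')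
  -- get δ with derivative bounds
  obtain ⟨δ₀, hδ₀mem, hδ₀⟩ := mem_nhdsGT_iff_exists_Ioo_subset.1
    (hkd'.eventually (Ioo_mem_nhds (by linarith : ℓ - e < ℓ) (by linarith : ℓ < ℓ + e)))
  set δ : ℝ := min δ₀ μ / 2 with hδdef
  have hδpos : 0 < δ := by
    have : (0:ℝ) < δ₀ := hδ₀mem
    have : (0:ℝ) < min δ₀ μ := lt_min this hμ
    linarith
  have hδμ : δ < μ := by
    have : min δ₀ μ ≤ μ := min_le_right _ _
    linarith
  have hδδ₀ : δ < δ₀ := by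
    have h1 : (0:ℝ) < δ₀ := hδ₀mem
    have : min δ₀ μ ≤ δ₀ := min_le_left _ _
    linarith
  have hsub : Ioo (0:ℝ) δ ⊆ Ioo (0:ℝ) μ := fun x hx => ⟨hx.1, lt_trans hx.2 hδμ⟩
  have hder : ∀ s ∈ Ioo (0:ℝ) δ, deriv h s ∈ Ioo (ℓ - e) (ℓ + e) := by
    intro s hs
    exact hδ₀ ⟨hs.1, lt_trans hs.2 hδδ₀⟩
  -- monotonicity helper
  have mono : ∀ G : ℝ → ℝ, (∀ x ∈ Ioo (0:ℝ) δ, DifferentiableAt ℝ G x) →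
      (∀ x ∈ Ioo (0:ℝ) δ, 0 ≤ deriv G x) → MonotoneOn G (Ioo (0:ℝ) δ) := by
    intro G hd h0
    refine monotoneOn_of_deriv_nonneg (convex_Ioo _ _)
      (fun x hx => (hd x hx).continuousAt.continuousWithinAt)
      (fun x hx => (hd x (by rwa [interior_Ioo] at hx)).differentiableWithinAt)
      (fun x hx => h0 x (by rwa [interior_Ioo] at hx))
  have hhpos : ∀ s ∈ Ioo (0:ℝ) δ, 0 < h s := fun s hs =>
    div_pos (hKpos s (hsub hs)) (hkpos s (hsub hs))
  -- u and v monotone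
  have hlind : ∀ (c : ℝ) (x : ℝ), HasDerivAt (fun y : ℝ => c * y) c x := by
    intro c x
    simpa using (hasDerivAt_id x).const_mul c
  have uMono : MonotoneOn (fun s => h s - (ℓ - e) * s) (Ioo (0:ℝ) δ) := by
    refine mono _ (fun x hx => (hhdiff x (hsub hx)).sub (hlind _ x).differentiableAt) ?_
    intro x hx
    rw [(show HasDerivAt (fun s => h s - (ℓ - e) * s) (deriv h x - (ℓ - e)) x from
      (hhdiff x (hsub hx)).hasDerivAt.sub (hlind (ℓ - e) x)).deriv]
    have := (hder x hx).1
    linarith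
  have vMono : MonotoneOn (fun s => (ℓ + e) * s - h s) (Ioo (0:ℝ) δ) := by
    refine mono _ (fun x hx => (hlind _ x).differentiableAt.sub (hhdiff x (hsub hx))) ?_
    intro x hx
    rw [(show HasDerivAt (fun s => (ℓ + e) * s - h s) ((ℓ + e) - deriv h x) x from
      (hlind (ℓ + e) x).sub (hhdiff x (hsub hx)).hasDerivAt).deriv]
    have := (hder x hx).2
    linarith
  -- h has a limit L at 0+
  have hne : (Ioo (0:ℝ) δ).Nonempty := nonempty_Ioo.2 hδpos
  have hbdd : BddBelow ((fun s => h s - (ℓ - e) * s) '' Ioo (0:ℝ) δ) := by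
    refine ⟨-(ℓ - e) * δ, ?_⟩
    rintro y ⟨x, hx, rfl⟩
    have h1 := hhpos x hx
    simp only
    nlinarith [mul_nonneg (by linarith : (0:ℝ) ≤ ℓ - e) (by linarith [hx.2] : (0:ℝ) ≤ δ - x)]
  have hulim : Tendsto (fun s => h s - (ℓ - e) * s) (𝓝[>] (0:ℝ))
      (𝓝 (sInf ((fun s => h s - (ℓ - e) * s) '' Ioo (0:ℝ) δ))) :=
    MonotoneOn.tendsto_nhdsWithin_Ioo_right hne uMono hbdd
  set L : ℝ := sInf ((fun s => h s - (ℓ - e) * s) '' Ioo (0:ℝ) δ) with hLdef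
  have hlin0 : Tendsto (fun s : ℝ => (ℓ - e) * s) (𝓝[>] (0:ℝ)) (𝓝 0) := by
    have : Tendsto (fun s : ℝ => (ℓ - e) * s) (𝓝 (0:ℝ)) (𝓝 ((ℓ - e) * 0)) :=
      (continuous_const.mul continuous_id).tendsto 0
    simpa using this.mono_left nhdsWithin_le_nhds
  have hhlim : Tendsto h (𝓝[>] (0:ℝ)) (𝓝 L) := by
    have := hulim.add hlin0
    simpa using this
  -- L = 0
  have hL0 : L = 0 := by
    have hLnn : 0 ≤ L := by
      refine ge_of_tendsto hhlim ?_
      filter_upwards [Ioo_mem_nhdsGT_of_mem (left_mem_Ico.2 hδpos)] with x hx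
      exact (hhpos x hx).le
    rcases eq_or_lt_of_le hLnn with hEq | hLpos
    · exact hEq.symm
    · exfalso
      obtain ⟨δ₁, hδ₁mem, hδ₁⟩ := mem_nhdsGT_iff_exists_Ioo_subset.1
        ((hhlim.eventually (eventually_gt_nhds (by linarith : L/2 < L))).and
          (Ioo_mem_nhdsGT_of_mem (left_mem_Ico.2 hδpos)))
      have hδ₁pos : (0:ℝ) < δ₁ := hδ₁mem
      set δ₂ : ℝ := min δ₁ δ / 2 with hδ₂def
      have hδ₂pos : 0 < δ₂ := by
        have : (0:ℝ) < min δ₁ δ := lt_min hδ₁pos hδpos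
        linarith
      have hδ₂δ₁ : δ₂ < δ₁ := by
        have : min δ₁ δ ≤ δ₁ := min_le_left _ _
        linarith
      have hδ₂δ : δ₂ < δ := by
        have : min δ₁ δ ≤ δ := min_le_right _ _
        linarith
      have hsub2 : Ioo (0:ℝ) δ₂ ⊆ Ioo (0:ℝ) δ₁ := fun x hx => ⟨hx.1, lt_trans hx.2 hδ₂δ₁⟩
      -- w monotone
      have wMono : MonotoneOn (fun x => (2/L) * x - Real.log (Kf x)) (Ioo (0:ℝ) δ₂) := by
        have mono2 : ∀ G : ℝ → ℝ, (∀ x ∈ Ioo (0:ℝ) δ₂, DifferentiableAt ℝ G x) →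
            (∀ x ∈ Ioo (0:ℝ) δ₂, 0 ≤ deriv G x) → MonotoneOn G (Ioo (0:ℝ) δ₂) := by
          intro G hd h0
          refine monotoneOn_of_deriv_nonneg (convex_Ioo _ _)
            (fun x hx => (hd x hx).continuousAt.continuousWithinAt)
            (fun x hx => (hd x (by rwa [interior_Ioo] at hx)).differentiableWithinAt)
            (fun x hx => h0 x (by rwa [interior_Ioo] at hx))
        refine mono2 _ ?_ ?_
        · intro x hx
          have hxμ : x ∈ Ioo (0:ℝ) μ := hsub ⟨hx.1, lt_trans hx.2 hδ₂δ⟩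
          exact (hlind (2/L) x).differentiableAt.sub
            (((hKd x hxμ).log (hKpos x hxμ).ne')).differentiableAt
        · intro x hx
          have hxμ : x ∈ Ioo (0:ℝ) μ := hsub ⟨hx.1, lt_trans hx.2 hδ₂δ⟩
          have hd2 : HasDerivAt (fun x => (2/L) * x - Real.log (Kf x)) (2/L - k x / Kf x) x :=
            (hlind (2/L) x).sub ((hKd x hxμ).log (hKpos x hxμ).ne')
          rw [hd2.deriv]
          have hhx : L/2 < h x := (hδ₁ (hsub2 hx)).1
          have hKx := hKpos x hxμ
          have hkx := hkpos x hxμ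
          have : k x / Kf x < 2 / L := by
            rw [div_lt_div_iff₀ hKx hLpos]
            have : Kf x / k x > L/2 := hhx
            rw [gt_iff_lt, lt_div_iff₀ hkx] at this
            linarith
          linarith
      -- contradiction with Kf → 0
      have hmem : δ₂/2 ∈ Ioo (0:ℝ) δ₂ := ⟨by linarith, by linarith⟩
      have hKlb : ∀ x ∈ Ioo (0:ℝ) (δ₂/2), Real.exp ((2/L) * x - ((2/L) * (δ₂/2) -
          Real.log (Kf (δ₂/2)))) ≤ Kf x := by
        intro x hx
        have hx2 : x ∈ Ioo (0:ℝ) δ₂ := ⟨hx.1, by linarith [hx.2]⟩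
        have hw := wMono hx2 hmem (by linarith [hx.2] : x ≤ δ₂/2)
        have hxμ : x ∈ Ioo (0:ℝ) μ := hsub ⟨hx.1, lt_trans hx2.2 hδ₂δ⟩
        have hKx := hKpos x hxμ
        calc Real.exp ((2/L) * x - ((2/L) * (δ₂/2) - Real.log (Kf (δ₂/2))))
            ≤ Real.exp (Real.log (Kf x)) := by
              apply Real.exp_le_exp.2
              simp only at hw
              linarith
        _ = Kf x := Real.exp_log hKx
      have hev := hK0.eventually (eventually_lt_nhds (Real.exp_pos
        ((2/L) * 0 - ((2/L) * (δ₂/2) - Real.log (Kf (δ₂/2))))))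
      obtain ⟨x, hx1, hx2⟩ := (hev.and (Ioo_mem_nhdsGT_of_mem
        (left_mem_Ico.2 (by linarith : (0:ℝ) < δ₂/2)))).exists
      have := hKlb x hx2
      have hmono : Real.exp ((2/L)*0 - ((2/L) * (δ₂/2) - Real.log (Kf (δ₂/2)))) ≤
          Real.exp ((2/L)*x - ((2/L) * (δ₂/2) - Real.log (Kf (δ₂/2)))) := by
        apply Real.exp_le_exp.2
        have : 0 ≤ (2/L) * x := mul_nonneg (div_nonneg (by norm_num) hLpos.le) hx2.1.le
        linarith
      linarith
  -- h s bounds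
  rw [hL0] at hhlim
  have hub : ∀ s ∈ Ioo (0:ℝ) δ, h s ≤ (ℓ + e) * s := by
    intro s hs
    have hv : Tendsto (fun s => (ℓ + e) * s - h s) (𝓝[>] (0:ℝ)) (𝓝 0) := by
      have hlin0' : Tendsto (fun s : ℝ => (ℓ + e) * s) (𝓝[>] (0:ℝ)) (𝓝 0) := by
        have : Tendsto (fun s : ℝ => (ℓ + e) * s) (𝓝 (0:ℝ)) (𝓝 ((ℓ + e) * 0)) :=
          (continuous_const.mul continuous_id).tendsto 0
        simpa using this.mono_left nhdsWithin_le_nhds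
      simpa using hlin0'.sub hhlim
    have : (0:ℝ) ≤ (ℓ + e) * s - h s := by
      refine le_of_tendsto hv ?_
      filter_upwards [Ioo_mem_nhdsGT_of_mem (left_mem_Ico.2 hs.1)] with x hx
      simpa using vMono ⟨hx.1, lt_trans hx.2 hs.2⟩ hs hx.2.le
    linarith
  have hlb : ∀ s ∈ Ioo (0:ℝ) δ, (ℓ - e) * s ≤ h s := by
    intro s hs
    have hu : Tendsto (fun s => h s - (ℓ - e) * s) (𝓝[>] (0:ℝ)) (𝓝 0) := by
      simpa using hhlim.sub hlin0
    have : (0:ℝ) ≤ h s - (ℓ - e) * s := by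
      refine le_of_tendsto hu ?_
      filter_upwards [Ioo_mem_nhdsGT_of_mem (left_mem_Ico.2 hs.1)] with x hx
      simpa using uMono ⟨hx.1, lt_trans hx.2 hs.2⟩ hs hx.2.le
    linarith
  -- log bounds for Kf
  have hle : (0:ℝ) < ℓ - e := by linarith
  have hlepos : (0:ℝ) < ℓ + e := by linarith
  have w1Mono : MonotoneOn (fun x => Real.log (Kf x) - (1/(ℓ + e)) * Real.log x)
      (Ioo (0:ℝ) δ) := by
    refine mono _ ?_ ?_
    · intro x hx
      exact ((hKd x (hsub hx)).log (hKpos x (hsub hx)).ne').differentiableAt.sub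
        ((Real.hasDerivAt_log hx.1.ne').const_mul (1/(ℓ + e))).differentiableAt
    · intro x hx
      have hd2 : HasDerivAt (fun x => Real.log (Kf x) - (1/(ℓ + e)) * Real.log x)
          (k x / Kf x - (1/(ℓ + e)) * x⁻¹) x :=
        ((hKd x (hsub hx)).log (hKpos x (hsub hx)).ne').sub
          ((Real.hasDerivAt_log hx.1.ne').const_mul (1/(ℓ + e)))
      rw [hd2.deriv]
      have hKx := hKpos x (hsub hx)
      have hkx := hkpos x (hsub hx)
      have hhx := hub x hx
      have h1 : Kf x ≤ (ℓ + e) * x * k x := by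
        have : Kf x / k x ≤ (ℓ + e) * x := hhx
        rwa [div_le_iff₀ hkx] at this
      have h2 : (1/(ℓ + e)) * x⁻¹ ≤ k x / Kf x := by
        rw [one_div, ← mul_inv, ← one_div]
        rw [div_le_div_iff₀ (mul_pos hlepos hx.1) hKx]
        nlinarith
      linarith
  have w2Mono : MonotoneOn (fun x => (1/(ℓ - e)) * Real.log x - Real.log (Kf x))
      (Ioo (0:ℝ) δ) := by
    refine mono _ ?_ ?_
    · intro x hx
      exact ((Real.hasDerivAt_log hx.1.ne').const_mul (1/(ℓ - e))).differentiableAt.sub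
        ((hKd x (hsub hx)).log (hKpos x (hsub hx)).ne').differentiableAt
    · intro x hx
      have hd2 : HasDerivAt (fun x => (1/(ℓ - e)) * Real.log x - Real.log (Kf x))
          ((1/(ℓ - e)) * x⁻¹ - k x / Kf x) x :=
        ((Real.hasDerivAt_log hx.1.ne').const_mul (1/(ℓ - e))).sub
          ((hKd x (hsub hx)).log (hKpos x (hsub hx)).ne')
      rw [hd2.deriv]
      have hKx := hKpos x (hsub hx)
      have hkx := hkpos x (hsub hx)
      have hhx := hlb x hx
      have h1 : (ℓ - e) * x * k x ≤ Kf x := by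
        have : (ℓ - e) * x ≤ Kf x / k x := hhx
        rwa [le_div_iff₀ hkx] at this
      have h2 : k x / Kf x ≤ (1/(ℓ - e)) * x⁻¹ := by
        rw [one_div, ← mul_inv, ← one_div]
        rw [div_le_div_iff₀ hKx (mul_pos hle hx.1)]
        nlinarith
      linarith
  -- final bounds
  have hδ2mem : δ/2 ∈ Ioo (0:ℝ) δ := ⟨by linarith, by linarith⟩
  have hKδ2 := hKpos (δ/2) (hsub hδ2mem)
  refine ⟨δ/2, Kf (δ/2) * (δ/2) ^ (-(1/(ℓ - e))), Kf (δ/2) * (δ/2) ^ (-(1/(ℓ + e))),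
    by linarith, by linarith, mul_pos hKδ2 (Real.rpow_pos_of_pos (by linarith) _),
    mul_pos hKδ2 (Real.rpow_pos_of_pos (by linarith) _), ?_⟩
  intro s hs
  have hsδ : s ∈ Ioo (0:ℝ) δ := ⟨hs.1, by linarith [hs.2]⟩
  have hsμ : s ∈ Ioo (0:ℝ) μ := hsub hsδ
  have hKs := hKpos s hsμ
  have hks := hkpos s hsμ
  refine ⟨hKs, ?_, ?_, ?_⟩
  · -- lower bound
    have hw := w2Mono hsδ hδ2mem (by linarith [hs.2] : s ≤ δ/2)
    simp only at hw
    have hlog : Real.log (Kf (δ/2)) + (1/(ℓ - e)) * Real.log s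
        - (1/(ℓ - e)) * Real.log (δ/2) ≤ Real.log (Kf s) := by linarith
    calc Kf (δ/2) * (δ/2) ^ (-(1/(ℓ - e))) * s ^ (1/(ℓ - e))
        = Real.exp (Real.log (Kf (δ/2)) + (1/(ℓ - e)) * Real.log s
          - (1/(ℓ - e)) * Real.log (δ/2)) :=
          (exp_combo hKδ2 (by linarith : (0:ℝ) < δ/2) hs.1).symm
    _ ≤ Real.exp (Real.log (Kf s)) := Real.exp_le_exp.2 hlog
    _ = Kf s := Real.exp_log hKs
  · -- upper bound
    have hw := w1Mono hsδ hδ2mem (by linarith [hs.2] : s ≤ δ/2)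
    simp only at hw
    have hlog : Real.log (Kf s) ≤ Real.log (Kf (δ/2)) + (1/(ℓ + e)) * Real.log s
        - (1/(ℓ + e)) * Real.log (δ/2) := by linarith
    calc Kf s = Real.exp (Real.log (Kf s)) := (Real.exp_log hKs).symm
    _ ≤ Real.exp (Real.log (Kf (δ/2)) + (1/(ℓ + e)) * Real.log s
          - (1/(ℓ + e)) * Real.log (δ/2)) := Real.exp_le_exp.2 hlog
    _ = Kf (δ/2) * (δ/2) ^ (-(1/(ℓ + e))) * s ^ (1/(ℓ + e)) :=
          exp_combo hKδ2 (by linarith : (0:ℝ) < δ/2) hs.1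
  · -- k lower bound
    have hhs := hub s hsδ
    rw [div_le_iff₀ (mul_pos hlepos hs.1)]
    have : Kf s / k s ≤ (ℓ + e) * s := hhs
    rw [div_le_iff₀ hks] at this
    linarith

private lemma phi_bounds (p ρ e : ℝ) (hp : 1 < p) (hρ1 : 1 < ρ) (hρp : p - 1 < ρ)
    (he : 0 < e) (he1 : e < 1) (heρ : e < ρ + 1 - p)
    (f F φ : ℝ → ℝ) (hfC : ContDiffOn ℝ 1 f (Ici (0:ℝ))) (hf0 : f 0 = 0)
    (hf' : ∀ u : ℝ, 0 < u → 0 < deriv f u)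
    (hRV : IsRV f ρ)
    (hF : ∀ t, F t = ∫ s in (0:ℝ)..t, f s)
    (hφpos : ∀ t : ℝ, 0 < t → 0 < φ t)
    (hφ : ∀ t : ℝ, 0 < t →
      (∫ s in Ioi (φ t), ((p / (p - 1)) * F s) ^ (-(1 / p))) = t) :
    ∃ T A1 A2 : ℝ, 0 < T ∧ 0 < A1 ∧ 0 < A2 ∧
      ∀ t : ℝ, 0 < t → t < T →
        φ t ≤ (t / A1) ^ (-(1 / ((ρ + 1 - p - e) / p))) ∧
        (t / A2) ^ (-(1 / ((ρ + 1 - p + e) / p))) ≤ φ t := by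
  have hppos : (0:ℝ) < p := by linarith
  have hp1 : (0:ℝ) < p - 1 := by linarith
  have hq : (0:ℝ) < p / (p - 1) := div_pos hppos hp1
  -- f monotone and positive
  have hfmono : StrictMonoOn f (Ici 0) := by
    refine strictMonoOn_of_deriv_pos (convex_Ici 0) hfC.continuousOn ?_
    intro x hx
    rw [interior_Ici] at hx
    exact hf' x hx
  have hfpos : ∀ x : ℝ, 0 < x → 0 < f x := by
    intro x hx
    have := hfmono (self_mem_Ici) (mem_Ici.2 hx.le) hx
    rwa [hf0] at this
  have hfnn : ∀ x : ℝ, 0 ≤ x → 0 ≤ f x := by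
    intro x hx
    rcases eq_or_lt_of_le hx with h | h
    · rw [← h, hf0]
    · exact (hfpos x h).le
  -- power bounds for f
  obtain ⟨U, c, C, hU1, hc, hC, hbound⟩ :=
    exists_pow_bounds he (by linarith) hfmono.monotoneOn hfpos (hRV 2 two_pos)
  have hUpos : (0:ℝ) < U := by linarith
  -- interval integrability of f
  have hfii : ∀ a b : ℝ, 0 ≤ a → a ≤ b → IntervalIntegrable f volume a b := by
    intro a b ha hab
    apply ContinuousOn.intervalIntegrable
    apply hfC.continuousOn.mono
    intro x hx
    rw [uIcc_of_le hab] at hx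
    exact le_trans ha hx.1
  -- F value and nonnegativity
  have hFnn : ∀ x : ℝ, 0 ≤ x → 0 ≤ F x := by
    intro x hx
    rw [hF]
    exact intervalIntegral.integral_nonneg hx (fun u hu => hfnn u hu.1)
  have hFdiff : ∀ a b : ℝ, 0 ≤ a → a ≤ b → F b - F a = ∫ s in a..b, f s := by
    intro a b ha hab
    have h1 : (∫ s in (0:ℝ)..a, f s) + (∫ s in a..b, f s) = ∫ s in (0:ℝ)..b, f s :=
      intervalIntegral.integral_add_adjacent_intervals (hfii 0 a le_rfl ha)
        (hfii a b ha hab)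
    rw [hF, hF]
    linarith
  -- F bounds
  set V : ℝ := 2 * U with hVdef
  have hVpos : (0:ℝ) < V := by linarith
  have hV1 : (1:ℝ) ≤ V := by linarith
  have hFlow : ∀ x : ℝ, V ≤ x → c / 2 ^ (ρ + 1 - e) * x ^ (ρ + 1 - e) ≤ F x := by
    intro x hx
    have hxpos : (0:ℝ) < x := lt_of_lt_of_le hVpos hx
    have hx2U : U ≤ x / 2 := by linarith
    have hx2pos : (0:ℝ) < x / 2 := by linarith
    have hpt : ∀ s ∈ Icc (x/2) x, c * (x/2) ^ (ρ - e) ≤ f s := by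
      intro s hs
      calc c * (x/2) ^ (ρ - e) ≤ f (x/2) := (hbound (x/2) hx2U).1
      _ ≤ f s := hfmono.monotoneOn (mem_Ici.2 hx2pos.le)
            (mem_Ici.2 (le_trans hx2pos.le hs.1)) hs.1
    have hint : (∫ s in (x/2)..x, (c * (x/2) ^ (ρ - e))) ≤ ∫ s in (x/2)..x, f s := by
      apply intervalIntegral.integral_mono_on (by linarith) (intervalIntegrable_const)
        (hfii (x/2) x hx2pos.le (by linarith)) hpt
    rw [intervalIntegral.integral_const, smul_eq_mul] at hint
    have hFv := hFdiff (x/2) x hx2pos.le (by linarith)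
    have hFx2 := hFnn (x/2) hx2pos.le
    have hkey : (x - x/2) * (c * (x/2) ^ (ρ - e)) = c * (x/2) ^ (ρ + 1 - e) := by
      have : (x/2 : ℝ) ^ (ρ + 1 - e) = (x/2) ^ (ρ - e) * (x/2) := by
        rw [show ρ + 1 - e = (ρ - e) + 1 by ring, Real.rpow_add hx2pos, Real.rpow_one]
      rw [this]
      ring
    have hdiv : (x/2 : ℝ) ^ (ρ + 1 - e) = x ^ (ρ + 1 - e) / 2 ^ (ρ + 1 - e) :=
      Real.div_rpow hxpos.le (by norm_num : (0:ℝ) ≤ 2) _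
    rw [hkey, hdiv] at hint
    have : c * (x ^ (ρ + 1 - e) / 2 ^ (ρ + 1 - e)) = c / 2 ^ (ρ + 1 - e) * x ^ (ρ + 1 - e) := by
      ring
    linarith [hint, hFv, hFx2]
  have hFupp : ∀ x : ℝ, V ≤ x → F x ≤ (F U + C) * x ^ (ρ + 1 + e) := by
    intro x hx
    have hxpos : (0:ℝ) < x := lt_of_lt_of_le hVpos hx
    have hUx : U ≤ x := by linarith
    have hx1 : (1:ℝ) ≤ x := le_trans hV1 hx
    have hpt : ∀ s ∈ Icc U x, f s ≤ C * x ^ (ρ + e) := by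
      intro s hs
      calc f s ≤ C * s ^ (ρ + e) := (hbound s hs.1).2
      _ ≤ C * x ^ (ρ + e) := by
          apply mul_le_mul_of_nonneg_left _ hC.le
          exact Real.rpow_le_rpow (le_trans hUpos.le hs.1) hs.2 (by linarith)
    have hint : (∫ s in U..x, f s) ≤ ∫ s in U..x, (C * x ^ (ρ + e)) := by
      apply intervalIntegral.integral_mono_on hUx (hfii U x hUpos.le hUx)
        (intervalIntegrable_const) hpt
    rw [intervalIntegral.integral_const, smul_eq_mul] at hint
    have hFv := hFdiff U x hUpos.le hUx
    have h1 : (x - U) * (C * x ^ (ρ + e)) ≤ C * x ^ (ρ + 1 + e) := by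
      have hxe : x ^ (ρ + 1 + e) = x ^ (ρ + e) * x := by
        rw [show ρ + 1 + e = (ρ + e) + 1 by ring, Real.rpow_add hxpos, Real.rpow_one]
      rw [hxe]
      have h2 : (0:ℝ) ≤ x ^ (ρ + e) := Real.rpow_nonneg hxpos.le _
      nlinarith [mul_nonneg (mul_nonneg hUpos.le hC.le) h2]
    have h3 : F U ≤ F U * x ^ (ρ + 1 + e) := by
      have h4 : (1:ℝ) ≤ x ^ (ρ + 1 + e) := Real.one_le_rpow hx1 (by linarith)
      have h5 := hFnn U hUpos.le
      nlinarith
    nlinarith [hFnn U hUpos.le]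
  -- the integrand g
  set g : ℝ → ℝ := fun s => (p / (p - 1) * F s) ^ (-(1 / p)) with hgdef
  set q1 : ℝ := (ρ + 1 - e) / p with hq1def
  set q2 : ℝ := (ρ + 1 + e) / p with hq2def
  have hq1 : 1 < q1 := by rw [hq1def, lt_div_iff₀ hppos]; linarith
  have hq2 : 1 < q2 := by rw [hq2def, lt_div_iff₀ hppos]; linarith
  set c2 : ℝ := c / 2 ^ (ρ + 1 - e) with hc2def
  have hc2 : 0 < c2 := div_pos hc (Real.rpow_pos_of_pos two_pos _)
  set C2 : ℝ := F U + C with hC2def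
  have hC2 : 0 < C2 := by
    have := hFnn U hUpos.le
    rw [hC2def]
    linarith
  set Cg : ℝ := (p/(p-1) * c2) ^ (-(1/p)) with hCgdef
  set cg : ℝ := (p/(p-1) * C2) ^ (-(1/p)) with hcgdef
  have hCg : 0 < Cg := Real.rpow_pos_of_pos (mul_pos hq hc2) _
  have hcg : 0 < cg := Real.rpow_pos_of_pos (mul_pos hq hC2) _
  have hFposV : ∀ s : ℝ, V ≤ s → 0 < p/(p-1) * F s := by
    intro s hs
    have hspos : 0 < s := lt_of_lt_of_le hVpos hs
    have h1 : 0 < c2 * s ^ (ρ + 1 - e) := mul_pos hc2 (Real.rpow_pos_of_pos hspos _)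
    have h2 := hFlow s hs
    have hFs : 0 < F s := by linarith
    exact mul_pos hq hFs
  -- pointwise bounds on g
  have hgub : ∀ s : ℝ, V ≤ s → g s ≤ Cg * s ^ (-q1) := by
    intro s hs
    have hspos : 0 < s := lt_of_lt_of_le hVpos hs
    have h1 : p/(p-1) * (c2 * s ^ (ρ+1-e)) ≤ p/(p-1) * F s :=
      mul_le_mul_of_nonneg_left (hFlow s hs) hq.le
    have h0 : 0 < p/(p-1) * (c2 * s ^ (ρ+1-e)) :=
      mul_pos hq (mul_pos hc2 (Real.rpow_pos_of_pos hspos _))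
    have h2 := Real.rpow_le_rpow_of_nonpos h0 h1 (by rw [neg_nonpos]; positivity : -(1/p) ≤ 0)
    have hee1 : (ρ+1-e) * -(1/p) = -q1 := by
      rw [hq1def]
      field_simp
    have heq1 : p/(p-1)*(c2*s^(ρ+1-e)) = (p/(p-1)*c2) * s^(ρ+1-e) := by ring
    calc g s ≤ (p/(p-1) * (c2 * s^(ρ+1-e))) ^ (-(1/p)) := h2
    _ = Cg * s ^ (-q1) := by
        rw [heq1, Real.mul_rpow (mul_pos hq hc2).le (Real.rpow_nonneg hspos.le _),
          ← Real.rpow_mul hspos.le, hee1, hCgdef]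
  have hglb : ∀ s : ℝ, V ≤ s → cg * s ^ (-q2) ≤ g s := by
    intro s hs
    have hspos : 0 < s := lt_of_lt_of_le hVpos hs
    have h1 : p/(p-1) * F s ≤ p/(p-1) * (C2 * s ^ (ρ+1+e)) :=
      mul_le_mul_of_nonneg_left (hFupp s hs) hq.le
    have h0 : 0 < p/(p-1) * F s := hFposV s hs
    have h2 := Real.rpow_le_rpow_of_nonpos h0 h1 (by rw [neg_nonpos]; positivity : -(1/p) ≤ 0)
    have hee2 : (ρ+1+e) * -(1/p) = -q2 := by
      rw [hq2def]
      field_simp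
    have heq2 : p/(p-1)*(C2*s^(ρ+1+e)) = (p/(p-1)*C2) * s^(ρ+1+e) := by ring
    have hstart : cg * s ^ (-q2) = (p/(p-1) * (C2 * s^(ρ+1+e))) ^ (-(1/p)) := by
      rw [heq2, Real.mul_rpow (mul_pos hq hC2).le (Real.rpow_nonneg hspos.le _),
        ← Real.rpow_mul hspos.le, hee2, hcgdef]
    calc cg * s ^ (-q2) = (p/(p-1) * (C2 * s^(ρ+1+e))) ^ (-(1/p)) := hstart
    _ ≤ g s := h2
  -- derivative of F, continuity of g
  have hFderiv : ∀ x : ℝ, 0 < x → HasDerivAt F (f x) x := by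
    intro x hx
    have hcont : ContinuousOn f (Ioi 0) := hfC.continuousOn.mono Ioi_subset_Ici_self
    have h1 : HasDerivAt (fun t => ∫ s in (0:ℝ)..t, f s) (f x) x :=
      intervalIntegral.integral_hasDerivAt_right (hfii 0 x le_rfl hx.le)
        (ContinuousOn.stronglyMeasurableAtFilter isOpen_Ioi hcont x hx)
        (hcont.continuousAt (Ioi_mem_nhds hx))
    have : F = fun t => ∫ s in (0:ℝ)..t, f s := funext hF
    rw [this]
    exact h1
  have hgcont : ContinuousOn g (Ici V) := by
    apply ContinuousOn.rpow_const
    · apply continuousOn_const.mul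
      intro x hx
      exact ((hFderiv x (lt_of_lt_of_le hVpos hx)).differentiableAt.continuousAt).continuousWithinAt
    · intro x hx
      exact Or.inl (hFposV x hx).ne'
  -- integrability of g on tails
  have hgnn : ∀ s : ℝ, 0 < s → 0 ≤ g s := by
    intro s hs
    exact Real.rpow_nonneg (mul_nonneg hq.le (hFnn s hs.le)) _
  have hgint : ∀ x : ℝ, V ≤ x → IntegrableOn g (Ioi x) := by
    intro x hx
    have hxpos : 0 < x := lt_of_lt_of_le hVpos hx
    have hbint : IntegrableOn (fun s => Cg * s ^ (-q1)) (Ioi x) :=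
      (integrableOn_Ioi_rpow_of_lt (by linarith : -q1 < -1) hxpos).const_mul Cg
    apply Integrable.mono' hbint
      ((hgcont.mono (fun y hy => le_trans hx (le_of_lt hy))).aestronglyMeasurable
        measurableSet_Ioi)
    filter_upwards [ae_restrict_mem measurableSet_Ioi] with y hy
    have hyV : V ≤ y := le_trans hx (le_of_lt hy)
    rw [Real.norm_eq_abs, abs_of_nonneg (hgnn y (lt_of_lt_of_le hVpos hyV))]
    exact hgub y hyV
  -- integral bounds
  have hGub : ∀ x : ℝ, V ≤ x → (∫ s in Ioi x, g s) ≤ Cg/(q1-1) * x ^ (1 - q1) := by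
    intro x hx
    have hxpos : 0 < x := lt_of_lt_of_le hVpos hx
    have hbint : IntegrableOn (fun s => Cg * s ^ (-q1)) (Ioi x) :=
      (integrableOn_Ioi_rpow_of_lt (by linarith : -q1 < -1) hxpos).const_mul Cg
    have h1 : (∫ s in Ioi x, g s) ≤ ∫ s in Ioi x, Cg * s ^ (-q1) :=
      setIntegral_mono_on (hgint x hx) hbint measurableSet_Ioi
        (fun y hy => hgub y (le_trans hx (le_of_lt hy)))
    have h2 : (∫ s in Ioi x, Cg * s ^ (-q1)) = Cg * ∫ s in Ioi x, s ^ (-q1) :=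
      integral_const_mul Cg _
    have h3 : (∫ s in Ioi x, s ^ (-q1) : ℝ) = -x ^ (-q1 + 1) / (-q1 + 1) :=
      integral_Ioi_rpow_of_lt (by linarith) hxpos
    have h4 : Cg * (-x ^ (-q1 + 1) / (-q1 + 1)) = Cg/(q1-1) * x ^ (1 - q1) := by
      rw [show (1 - q1 : ℝ) = -q1 + 1 by ring]
      have hne : (-q1 + 1 : ℝ) ≠ 0 := ne_of_lt (by linarith)
      have hne' : (q1 - 1 : ℝ) ≠ 0 := ne_of_gt (by linarith)
      field_simp
      ring
    rw [h2, h3, h4] at h1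
    exact h1
  have hGlb : ∀ x : ℝ, V ≤ x → cg/(q2-1) * x ^ (1 - q2) ≤ ∫ s in Ioi x, g s := by
    intro x hx
    have hxpos : 0 < x := lt_of_lt_of_le hVpos hx
    have hbint : IntegrableOn (fun s => cg * s ^ (-q2)) (Ioi x) :=
      (integrableOn_Ioi_rpow_of_lt (by linarith : -q2 < -1) hxpos).const_mul cg
    have h1 : (∫ s in Ioi x, cg * s ^ (-q2)) ≤ ∫ s in Ioi x, g s :=
      setIntegral_mono_on hbint (hgint x hx) measurableSet_Ioi
        (fun y hy => hglb y (le_trans hx (le_of_lt hy)))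
    have h2 : (∫ s in Ioi x, cg * s ^ (-q2)) = cg * ∫ s in Ioi x, s ^ (-q2) :=
      integral_const_mul cg _
    have h3 : (∫ s in Ioi x, s ^ (-q2) : ℝ) = -x ^ (-q2 + 1) / (-q2 + 1) :=
      integral_Ioi_rpow_of_lt (by linarith) hxpos
    have h4 : cg * (-x ^ (-q2 + 1) / (-q2 + 1)) = cg/(q2-1) * x ^ (1 - q2) := by
      rw [show (1 - q2 : ℝ) = -q2 + 1 by ring]
      have hne : (-q2 + 1 : ℝ) ≠ 0 := ne_of_lt (by linarith)
      have hne' : (q2 - 1 : ℝ) ≠ 0 := ne_of_gt (by linarith)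
      field_simp
      ring
    rw [h2, h3, h4] at h1
    exact h1
  -- GW and φ > V
  set GW : ℝ := ∫ s in Ioi V, g s with hGWdef
  have hGWpos : 0 < GW := by
    have h1 := hGlb V le_rfl
    have h2 : 0 < cg/(q2-1) * V ^ (1 - q2) :=
      mul_pos (div_pos hcg (by linarith)) (Real.rpow_pos_of_pos hVpos _)
    linarith
  have hφV : ∀ t : ℝ, 0 < t → t < GW → V < φ t := by
    intro t ht htW
    by_contra hcon
    push_neg at hcon
    have hphit := hφpos t ht
    have hint2 : IntegrableOn g (Ioi (φ t)) := by
      by_contra hni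
      have h0 : (∫ s in Ioi (φ t), g s) = 0 := integral_undef hni
      rw [hφ t ht] at h0
      linarith
    have hmono2 : GW ≤ ∫ s in Ioi (φ t), g s := by
      apply setIntegral_mono_set hint2
      · filter_upwards [ae_restrict_mem measurableSet_Ioi] with y hy
        exact hgnn y (lt_trans hphit hy)
      · exact HasSubset.Subset.eventuallyLE (Ioi_subset_Ioi hcon)
    rw [hφ t ht] at hmono2
    linarith
  -- conclusion
  have hA1 : 0 < Cg/(q1-1) := div_pos hCg (by linarith)
  have hA2 : 0 < cg/(q2-1) := div_pos hcg (by linarith)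
  refine ⟨GW, Cg/(q1-1), cg/(q2-1), hGWpos, hA1, hA2, ?_⟩
  intro t ht htW
  have hφt := hφV t ht htW
  have hφtpos := hφpos t ht
  have hub2 : t ≤ Cg/(q1-1) * (φ t) ^ (1-q1) := by
    have h := hGub (φ t) hφt.le
    rwa [hφ t ht] at h
  have hlb2 : cg/(q2-1) * (φ t) ^ (1-q2) ≤ t := by
    have h := hGlb (φ t) hφt.le
    rwa [hφ t ht] at h
  have hq1e : (ρ + 1 - p - e)/p = q1 - 1 := by
    rw [hq1def]
    field_simp
    ring
  have hq2e : (ρ + 1 - p + e)/p = q2 - 1 := by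
    rw [hq2def]
    field_simp
    ring
  constructor
  · rw [hq1e]
    have h1 : t / (Cg/(q1-1)) ≤ (φ t)^(1-q1) :=
      (div_le_iff₀ hA1).2 (hub2.trans_eq (mul_comm _ _))
    have h2 : 0 < t / (Cg/(q1-1)) := div_pos ht hA1
    have hexp : -(1/(q1-1)) ≤ 0 := by
      have : 0 < 1/(q1-1) := by
        apply div_pos one_pos
        linarith
      linarith
    have h3 := Real.rpow_le_rpow_of_nonpos h2 h1 hexp
    have h4 : ((φ t) ^ (1-q1)) ^ (-(1/(q1-1))) = φ t := by
      rw [← Real.rpow_mul hφtpos.le]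
      have he1 : (1 - q1) * (-(1/(q1 - 1))) = (q1-1) * (1/(q1-1)) := by ring
      rw [he1, mul_one_div, div_self (ne_of_gt (by linarith : (0:ℝ) < q1 - 1)), Real.rpow_one]
    rw [h4] at h3
    exact h3
  · rw [hq2e]
    have h1 : (φ t)^(1-q2) ≤ t / (cg/(q2-1)) :=
      (le_div_iff₀ hA2).2 (by linarith [hlb2, mul_comm ((φ t) ^ (1-q2)) (cg/(q2-1))])
    have h2 : 0 < (φ t)^(1-q2) := Real.rpow_pos_of_pos hφtpos _
    have hexp : -(1/(q2-1)) ≤ 0 := by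
      have : 0 < 1/(q2-1) := by
        apply div_pos one_pos
        linarith
      linarith
    have h3 := Real.rpow_le_rpow_of_nonpos h2 h1 hexp
    have h4 : ((φ t) ^ (1-q2)) ^ (-(1/(q2-1))) = φ t := by
      rw [← Real.rpow_mul hφtpos.le]
      have he1 : (1 - q2) * (-(1/(q2 - 1))) = (q2-1) * (1/(q2-1)) := by ring
      rw [he1, mul_one_div, div_self (ne_of_gt (by linarith : (0:ℝ) < q2 - 1)), Real.rpow_one]
    rw [h4] at h3
    exact h3

/-- Let `k ∈ K_ℓ`, `f ∈ C¹([0,∞)) ∩ RV_ρ` with `f(0) = 0`, `f' > 0` on `(0,∞)`,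
`ρ > max{1, p-1, p-1-(p-2)/ℓ}`, `r = (ρ+1)/(ρ+1-p)`, and let `φ` be defined by
`∫_{φ(t)}^∞ (p'F(s))^{-1/p} ds = t` with `F(t) = ∫₀ᵗ f` and `p' = p/(p-1)`.
Then for any `ς` with `p(1-ℓ)/(r-1) < ς < ρ-1`,
`φ(K(s))^{-ς} / k(s)^p → 0` as `s → 0⁺`. -/
theorem phi_K_decay (p ℓ μ ρ : ℝ) (hp : 1 < p) (hℓ : 0 < ℓ) (hμ : 0 < μ)
    (k : ℝ → ℝ) (hk : memK ℓ μ k)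
    (f : ℝ → ℝ) (hfC : ContDiffOn ℝ 1 f (Ici (0:ℝ))) (hf0 : f 0 = 0)
    (hf' : ∀ u : ℝ, 0 < u → 0 < deriv f u)
    (hRV : IsRV f ρ) (hρ : max 1 (max (p - 1) (p - 1 - (p - 2) / ℓ)) < ρ)
    (r : ℝ) (hr : r = (ρ + 1) / (ρ + 1 - p))
    (F : ℝ → ℝ) (hF : ∀ t, F t = ∫ s in (0:ℝ)..t, f s)
    (φ : ℝ → ℝ) (hφpos : ∀ t : ℝ, 0 < t → 0 < φ t)
    (hφ : ∀ t : ℝ, 0 < t →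
      (∫ s in Ioi (φ t), ((p / (p - 1)) * F s) ^ (-(1 / p))) = t)
    (ς : ℝ) (hς1 : p * (1 - ℓ) / (r - 1) < ς) (hς2 : ς < ρ - 1) :
    Tendsto (fun s => (φ (∫ θ in (0:ℝ)..s, k θ)) ^ (-ς) / (k s) ^ p)
      (𝓝[>] (0:ℝ)) (𝓝 0) := by
  obtain ⟨hkpos, -, hkC1, hkint, hkd⟩ := hk
  have hρ1 : 1 < ρ := lt_of_le_of_lt (le_max_left _ _) hρ
  have hρp : p - 1 < ρ :=
    lt_of_le_of_lt ((le_max_left _ _).trans (le_max_right _ _)) hρ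
  have hppos : (0:ℝ) < p := by linarith
  have hρp1 : (0:ℝ) < ρ + 1 - p := by linarith
  have hς1' : (1 - ℓ) * (ρ + 1 - p) < ς := by
    have hr1 : r - 1 = p / (ρ + 1 - p) := by
      rw [hr]
      field_simp
      ring
    have h2 : p * (1 - ℓ) / (r - 1) = (1 - ℓ) * (ρ + 1 - p) := by
      rw [hr1]
      field_simp
    rwa [h2] at hς1
  obtain ⟨e, he, heℓ, he1, heρ, hγ1, hγ2, hγ3, hγ4⟩ :=
    exists_eps p ℓ ρ ς hp hℓ hρ1 hρp hς1'
  obtain ⟨δ, cK, CK, hδpos, hδμ, hcK, hCK, hKb⟩ :=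
    K_bounds ℓ μ hℓ hμ k hkpos hkC1 hkint hkd e he heℓ
  obtain ⟨T, A1, A2, hT, hA1, hA2, hφb⟩ :=
    phi_bounds p ρ e hp hρ1 hρp he he1 heρ f F φ hfC hf0 hf' hRV hF hφpos hφ
  set Kf : ℝ → ℝ := fun s => ∫ θ in (0:ℝ)..s, k θ with hKfdef
  have hlep : (0:ℝ) < ℓ + e := by linarith
  have hlem : (0:ℝ) < ℓ - e := by linarith
  -- rpow tendsto helper
  have hrpow0 : ∀ γ : ℝ, 0 < γ → Tendsto (fun s : ℝ => s ^ γ) (𝓝[>] (0:ℝ)) (𝓝 0) := by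
    intro γ hγ
    have hc : ContinuousAt (fun s : ℝ => s ^ γ) 0 :=
      Real.continuousAt_rpow_const 0 γ (Or.inr hγ.le)
    have h0 : (0:ℝ) ^ γ = 0 := Real.zero_rpow hγ.ne'
    have := hc.tendsto
    rw [h0] at this
    exact this.mono_left nhdsWithin_le_nhds
  -- Kf is eventually small
  have hKev : ∀ᶠ s in 𝓝[>] (0:ℝ), s ∈ Ioo (0:ℝ) δ :=
    Ioo_mem_nhdsGT_of_mem (left_mem_Ico.2 hδpos)
  have hK0 : Tendsto Kf (𝓝[>] (0:ℝ)) (𝓝 0) := by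
    apply squeeze_zero' (hKev.mono (fun s hs => (hKb s hs).1.le))
      (hKev.mono (fun s hs => (hKb s hs).2.2.1))
    have := (hrpow0 (1/(ℓ+e)) (by positivity)).const_mul CK
    simpa using this
  have hKsmall : ∀ᶠ s in 𝓝[>] (0:ℝ), Kf s < T := hK0.eventually (eventually_lt_nhds hT)
  -- main numerator bound
  have hmain : ∃ A σ : ℝ, 0 < A ∧ (0 < p + (σ - p) / (ℓ - e)) ∧ (0 < p + (σ - p) / (ℓ + e)) ∧
      ∀ᶠ s in 𝓝[>] (0:ℝ), φ (Kf s) ^ (-ς) ≤ (Kf s / A) ^ σ := by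
    rcases le_or_gt 0 ς with hσ | hσ
    · refine ⟨A2, ς * p / (ρ + 1 - p + e), hA2, hγ1, hγ2, ?_⟩
      filter_upwards [hKev, hKsmall] with s hs hsT
      have hKpos := (hKb s hs).1
      have hlow := (hφb (Kf s) hKpos hsT).2
      have hdiv : 0 < Kf s / A2 := div_pos hKpos hA2
      have hlbpos : 0 < (Kf s / A2) ^ (-(1 / ((ρ + 1 - p + e) / p))) :=
        Real.rpow_pos_of_pos hdiv _
      have h1 := Real.rpow_le_rpow_of_nonpos hlbpos hlow (by linarith : -ς ≤ 0)
      have h2 : (((Kf s) / A2) ^ (-(1 / ((ρ + 1 - p + e) / p)))) ^ (-ς)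
          = (Kf s / A2) ^ (ς * p / (ρ + 1 - p + e)) := by
        rw [← Real.rpow_mul hdiv.le]
        congr 1
        rw [show (-(1 / ((ρ + 1 - p + e) / p))) * (-ς) = ς / ((ρ + 1 - p + e) / p) by ring,
          div_div_eq_mul_div]
      rw [h2] at h1
      exact h1
    · refine ⟨A1, ς * p / (ρ + 1 - p - e), hA1, hγ3, hγ4, ?_⟩
      filter_upwards [hKev, hKsmall] with s hs hsT
      have hKpos := (hKb s hs).1
      have hupp := (hφb (Kf s) hKpos hsT).1
      have hφpos' := hφpos (Kf s) hKpos
      have hdiv : 0 < Kf s / A1 := div_pos hKpos hA1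
      have h1 := Real.rpow_le_rpow hφpos'.le hupp (by linarith : 0 ≤ -ς)
      have h2 : (((Kf s) / A1) ^ (-(1 / ((ρ + 1 - p - e) / p)))) ^ (-ς)
          = (Kf s / A1) ^ (ς * p / (ρ + 1 - p - e)) := by
        rw [← Real.rpow_mul hdiv.le]
        congr 1
        rw [show (-(1 / ((ρ + 1 - p - e) / p))) * (-ς) = ς / ((ρ + 1 - p - e) / p) by ring,
          div_div_eq_mul_div]
      rw [h2] at h1
      exact h1
  obtain ⟨A, σ, hA, hγa, hγb, hev⟩ := hmain
  -- bound function
  set γa : ℝ := p + 1/(ℓ - e) * (σ - p) with hγadef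
  set γb : ℝ := p + 1/(ℓ + e) * (σ - p) with hγbdef
  have hγa' : 0 < γa := by
    rw [hγadef, show 1/(ℓ - e) * (σ - p) = (σ - p)/(ℓ - e) by ring]
    exact hγa
  have hγb' : 0 < γb := by
    rw [hγbdef, show 1/(ℓ + e) * (σ - p) = (σ - p)/(ℓ + e) by ring]
    exact hγb
  set D0 : ℝ := (A ^ σ)⁻¹ * (ℓ + e) ^ p with hD0def
  have hD0 : 0 < D0 :=
    mul_pos (inv_pos.2 (Real.rpow_pos_of_pos hA _)) (Real.rpow_pos_of_pos hlep _)
  -- squeeze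
  apply squeeze_zero' (f := fun s => (φ (Kf s)) ^ (-ς) / (k s) ^ p)
    (g := fun s => D0 * cK ^ (σ - p) * s ^ γa + D0 * CK ^ (σ - p) * s ^ γb)
  · filter_upwards [hKev] with s hs
    have hKpos := (hKb s hs).1
    have hks : 0 < k s := hkpos s ⟨hs.1, hs.2.trans hδμ⟩
    exact div_nonneg (Real.rpow_nonneg (hφpos (Kf s) hKpos).le _)
      (Real.rpow_pos_of_pos hks p).le
  · filter_upwards [hKev, hev] with s hs hnum
    obtain ⟨hKpos, hK2, hK3, hK4⟩ := hKb s hs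
    have hspos : 0 < s := hs.1
    have hks : 0 < k s := hkpos s ⟨hs.1, hs.2.trans hδμ⟩
    have hkp : 0 < (k s) ^ p := Real.rpow_pos_of_pos hks p
    have hlow : 0 < Kf s / ((ℓ + e) * s) := div_pos hKpos (mul_pos hlep hspos)
    have hlowp : 0 < (Kf s / ((ℓ + e) * s)) ^ p := Real.rpow_pos_of_pos hlow p
    have step1 : φ (Kf s) ^ (-ς) / (k s) ^ p ≤ (Kf s / A) ^ σ / (k s) ^ p := by
      gcongr
    have step2 : (Kf s / A) ^ σ / (k s) ^ p ≤ (Kf s / A) ^ σ / (Kf s / ((ℓ + e) * s)) ^ p := by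
      gcongr (Kf s / A) ^ σ / ?_
      · exact Real.rpow_le_rpow hlow.le hK4 hppos.le
    have heq : (Kf s / A) ^ σ / (Kf s / ((ℓ + e) * s)) ^ p
        = D0 * (s ^ p * Kf s ^ (σ - p)) := by
      rw [Real.div_rpow hKpos.le hA.le, Real.div_rpow hKpos.le (mul_pos hlep hspos).le,
        Real.mul_rpow hlep.le hspos.le, Real.rpow_sub hKpos, hD0def]
      have h1 : A ^ σ ≠ 0 := (Real.rpow_pos_of_pos hA _).ne'
      have h2 : Kf s ^ p ≠ 0 := (Real.rpow_pos_of_pos hKpos _).ne'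
      field_simp
    have hm : 0 < cK * s ^ (1/(ℓ - e)) := mul_pos hcK (Real.rpow_pos_of_pos hspos _)
    have hsum : Kf s ^ (σ - p) ≤ (cK * s ^ (1/(ℓ - e))) ^ (σ - p)
        + (CK * s ^ (1/(ℓ + e))) ^ (σ - p) := rpow_le_add_aux hm hK2 hK3
    have hterm1 : s ^ p * (cK * s ^ (1/(ℓ - e))) ^ (σ - p) = cK ^ (σ - p) * s ^ γa := by
      rw [Real.mul_rpow hcK.le (Real.rpow_nonneg hspos.le _), ← Real.rpow_mul hspos.le,
        hγadef, Real.rpow_add hspos]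
      ring
    have hterm2 : s ^ p * (CK * s ^ (1/(ℓ + e))) ^ (σ - p) = CK ^ (σ - p) * s ^ γb := by
      rw [Real.mul_rpow hCK.le (Real.rpow_nonneg hspos.le _), ← Real.rpow_mul hspos.le,
        hγbdef, Real.rpow_add hspos]
      ring
    calc φ (Kf s) ^ (-ς) / (k s) ^ p
        ≤ (Kf s / A) ^ σ / (Kf s / ((ℓ + e) * s)) ^ p := le_trans step1 step2
    _ = D0 * (s ^ p * Kf s ^ (σ - p)) := heq
    _ ≤ D0 * (s ^ p * ((cK * s ^ (1/(ℓ - e))) ^ (σ - p) + (CK * s ^ (1/(ℓ + e))) ^ (σ - p))) := by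
        apply mul_le_mul_of_nonneg_left _ hD0.le
        exact mul_le_mul_of_nonneg_left hsum (Real.rpow_nonneg hspos.le _)
    _ = D0 * cK ^ (σ - p) * s ^ γa + D0 * CK ^ (σ - p) * s ^ γb := by
        rw [mul_add, hterm1, hterm2]
        ring
  · have h1 := (hrpow0 γa hγa').const_mul (D0 * cK ^ (σ - p))
    have h2 := (hrpow0 γb hγb').const_mul (D0 * CK ^ (σ - p))
    have := h1.add h2
    simpa using this
end
end

section
/- Let p > 1, ℓ ∈ (0,∞), and k ∈ K_ℓ with K(s) = ∫₀ˢ k(θ) dθ. Let f ∈ C¹([0,∞)) satisfy f(0) = 0, f'(u) > 0 for u > 0, and f ∈ RV_ρ with ρ > max{1, p−1, p−1−(p−2)/ℓ}. Set r = (ρ+1)/(ρ+1−p), F(t) = ∫₀ᵗ f(s) ds, p' = p/(p−1), and let φ : (0,∞) → (0,∞) be defined by ∫_{φ(t)}^∞ ds/(p'F(s))^{1/p} = t. Then the composition s ↦ k(K⁻¹(φ⁻¹(s))) belongs to RV_{(1−ℓ)/(1−r)}, and the function f*(s) := (k(K⁻¹(φ⁻¹(s))))^p · f(s) belongs to RV_q,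 where q = p(1−ℓ)/(1−r) + ρ = ρ − (ρ−p+1)(1−ℓ). -/
open Filter MeasureTheory Set Topology

noncomputable section

lemma karamata_direct {f : ℝ → ℝ} {ρ : ℝ}
    (hcont : ContinuousOn f (Ici (0:ℝ)))
    (hnn : ∀ v : ℝ, 0 ≤ v → 0 ≤ f v)
    (hpos : ∀ v : ℝ, 0 < v → 0 < f v)
    (hRV : IsRV f ρ) {ξ : ℝ} (hξ : 0 < ξ)
    (hFtop : Tendsto (fun u => ∫ s in (0:ℝ)..u, f s) atTop atTop) :
    Tendsto (fun u => (∫ s in (0:ℝ)..(ξ*u), f s) / (∫ s in (0:ℝ)..u, f s)) atTop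
      (𝓝 (ξ ^ (ρ+1))) := by
  set Fl : ℝ → ℝ := fun u => ∫ s in (0:ℝ)..u, f s with hFl
  have hint : ∀ a b : ℝ, 0 ≤ a → 0 ≤ b → IntervalIntegrable f volume a b := by
    intro a b ha hb
    exact (hcont.mono (fun x hx => le_trans (le_min ha hb) hx.1)).intervalIntegrable
  have hintc : ∀ a b : ℝ, 0 ≤ a → 0 ≤ b → IntervalIntegrable (fun v => f (ξ*v)) volume a b := by
    intro a b ha hb
    have : ContinuousOn (fun v => f (ξ*v)) (Ici (0:ℝ)) := by
      apply hcont.comp (continuous_const.mul continuous_id).continuousOn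
      intro x hx
      exact mul_nonneg hξ.le hx
    exact (this.mono (fun x hx => le_trans (le_min ha hb) hx.1)).intervalIntegrable
  have hFpos : ∀ u : ℝ, 0 < u → 0 < Fl u := by
    intro u hu
    exact intervalIntegral.intervalIntegral_pos_of_pos_on (hint 0 u le_rfl hu.le)
      (fun x hx => hpos x hx.1) hu
  rw [Metric.tendsto_nhds]
  intro ε hε
  have hξρ : (0:ℝ) < ξ ^ ρ := Real.rpow_pos_of_pos hξ ρ
  set ε₁ : ℝ := min (ξ^ρ/2) (ε/(4*ξ)) with hε₁def
  have hε₁ : 0 < ε₁ := lt_min (by positivity) (by positivity)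
  have hε₁ξρ : ε₁ ≤ ξ^ρ/2 := min_le_left _ _
  have hε₁ε : ξ * ε₁ ≤ ε/4 := by
    have : ε₁ ≤ ε/(4*ξ) := min_le_right _ _
    calc ξ * ε₁ ≤ ξ * (ε/(4*ξ)) := by nlinarith
    _ = ε/4 := by field_simp
  obtain ⟨V₀, hV₀⟩ := eventually_atTop.1
    ((Metric.tendsto_nhds.mp (hRV ξ hξ) ε₁ hε₁).and (eventually_ge_atTop 1))
  set V : ℝ := max V₀ 1 with hVdef
  have hV1 : (1:ℝ) ≤ V := le_max_right _ _
  have hVpt : ∀ v : ℝ, V ≤ v → (ξ^ρ - ε₁) * f v ≤ f (ξ*v) ∧ f (ξ*v) ≤ (ξ^ρ + ε₁) * f v := by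
    intro v hv
    obtain ⟨hd, _⟩ := hV₀ v (le_trans (le_max_left _ _) hv)
    have hfv : 0 < f v := hpos v (lt_of_lt_of_le (by linarith) hv)
    rw [Real.dist_eq, abs_lt] at hd
    have hcanc : f (ξ*v) / f v * f v = f (ξ*v) := div_mul_cancel₀ _ hfv.ne'
    constructor
    · nlinarith [hd.1]
    · nlinarith [hd.2]
  have hkey : ∀ u : ℝ, Fl (ξ*u) = ξ * ∫ v in (0:ℝ)..u, f (ξ*v) := by
    intro u
    have := intervalIntegral.smul_integral_comp_mul_left f ξ (a := 0) (b := u)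
    rw [mul_zero] at this
    rw [hFl]
    simp only [← this, smul_eq_mul]
  set C : ℝ := ∫ v in (0:ℝ)..V, f (ξ*v) with hCdef
  have hCnn : 0 ≤ C := intervalIntegral.integral_nonneg (by linarith)
    (fun x hx => hnn _ (mul_nonneg hξ.le hx.1))
  have hFlVnn : 0 ≤ Fl V := intervalIntegral.integral_nonneg (by linarith)
    (fun x hx => hnn _ hx.1)
  have hrpow : ξ^(ρ+1) = ξ^ρ * ξ := Real.rpow_add_one hξ.ne' ρ
  have hUlim : Tendsto (fun u => ξ*C/Fl u + ξ*(ξ^ρ+ε₁)) atTop (𝓝 (0 + ξ*(ξ^ρ+ε₁))) :=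
    (tendsto_const_nhds.div_atTop hFtop).add tendsto_const_nhds
  have hLlim : Tendsto (fun u => ξ*(ξ^ρ-ε₁) - ξ*ξ^ρ*(Fl V)/Fl u) atTop
      (𝓝 (ξ*(ξ^ρ-ε₁) - 0)) :=
    tendsto_const_nhds.sub (tendsto_const_nhds.div_atTop hFtop)
  have hUe : ∀ᶠ u in atTop, ξ*C/Fl u + ξ*(ξ^ρ+ε₁) < ξ^(ρ+1) + ε := by
    apply hUlim.eventually_lt_const
    rw [hrpow]; nlinarith
  have hLe : ∀ᶠ u in atTop, ξ^(ρ+1) - ε < ξ*(ξ^ρ-ε₁) - ξ*ξ^ρ*(Fl V)/Fl u := by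
    apply hLlim.eventually_const_lt
    rw [hrpow]; nlinarith
  filter_upwards [hUe, hLe, eventually_ge_atTop V, eventually_ge_atTop 1] with u h1 h2 h3 h4
  have hFlu : 0 < Fl u := hFpos u (by linarith)
  have hsub : Fl V + ∫ v in V..u, f v = Fl u :=
    intervalIntegral.integral_add_adjacent_intervals (hint 0 V le_rfl (by linarith))
      (hint V u (by linarith) (by linarith))
  have hsplit : C + ∫ v in V..u, f (ξ*v) = ∫ v in (0:ℝ)..u, f (ξ*v) :=
    intervalIntegral.integral_add_adjacent_intervals (hintc 0 V le_rfl (by linarith))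
      (hintc V u (by linarith) (by linarith))
  have hub2 : ∫ v in V..u, f (ξ*v) ≤ (ξ^ρ+ε₁) * (Fl u - Fl V) := by
    have : ∫ v in V..u, f (ξ*v) ≤ ∫ v in V..u, (ξ^ρ+ε₁) * f v :=
      intervalIntegral.integral_mono_on h3 (hintc V u (by linarith) (by linarith))
        ((hint V u (by linarith) (by linarith)).const_mul _)
        (fun x hx => (hVpt x hx.1).2)
    rwa [intervalIntegral.integral_const_mul, show (∫ v in V..u, f v) = Fl u - Fl V by
      linarith] at this
  have hlb2 : (ξ^ρ-ε₁) * (Fl u - Fl V) ≤ ∫ v in V..u, f (ξ*v) := by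
    have : ∫ v in V..u, (ξ^ρ-ε₁) * f v ≤ ∫ v in V..u, f (ξ*v) :=
      intervalIntegral.integral_mono_on h3
        ((hint V u (by linarith) (by linarith)).const_mul _)
        (hintc V u (by linarith) (by linarith))
        (fun x hx => (hVpt x hx.1).1)
    rwa [intervalIntegral.integral_const_mul, show (∫ v in V..u, f v) = Fl u - Fl V by
      linarith] at this
  have hub : Fl (ξ*u) ≤ ξ*(C + (ξ^ρ+ε₁)*(Fl u - Fl V)) := by
    rw [hkey u, ← hsplit]
    have := hub2
    nlinarith
  have hlb : ξ*((ξ^ρ-ε₁)*(Fl u - Fl V)) ≤ Fl (ξ*u) := by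
    rw [hkey u, ← hsplit]
    nlinarith
  have hdiv1 : ξ*C/Fl u * Fl u = ξ*C := div_mul_cancel₀ _ hFlu.ne'
  have hdiv2 : ξ*ξ^ρ*(Fl V)/Fl u * Fl u = ξ*ξ^ρ*(Fl V) := div_mul_cancel₀ _ hFlu.ne'
  rw [Real.dist_eq]
  show |Fl (ξ*u)/Fl u - ξ^(ρ+1)| < ε
  clear_value Fl C ε₁ V
  rw [hrpow] at h1 h2 ⊢
  have key1 : (ξ^ρ*ξ - ε) * Fl u < Fl (ξ*u) := by
    linarith only [mul_lt_mul_of_pos_right h2 hFlu, hdiv2, hlb,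
      mul_nonneg (mul_nonneg hξ.le hε₁.le) hFlVnn]
  have key2 : Fl (ξ*u) < (ξ^ρ*ξ + ε) * Fl u := by
    have hpr : 0 ≤ ξ*(ξ^ρ+ε₁)*Fl V :=
      mul_nonneg (mul_nonneg hξ.le (by positivity)) hFlVnn
    linarith only [mul_lt_mul_of_pos_right h1 hFlu, hdiv1, hub, hpr]
  have g1 : ξ^ρ*ξ - ε < Fl (ξ*u)/Fl u := (lt_div_iff₀ hFlu).mpr key1
  have g2 : Fl (ξ*u)/Fl u < ξ^ρ*ξ + ε := (div_lt_iff₀ hFlu).mpr key2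
  rw [abs_lt]
  constructor <;> linarith

lemma k_ratio {μ ℓ : ℝ} {k : ℝ → ℝ} (hμ : 0 < μ)
    (hkpos : ∀ s ∈ Ioo (0:ℝ) μ, 0 < k s)
    (hkC : ContDiffOn ℝ 1 k (Ioo (0:ℝ) μ))
    (hkint : IntegrableOn k (Ioo (0:ℝ) μ))
    (hder : Tendsto (deriv fun s => (∫ θ in (0:ℝ)..s, k θ) / k s) (𝓝[>] (0:ℝ)) (𝓝 ℓ))
    {x y : ℝ → ℝ} {c : ℝ} (hc : 0 < c)
    (hxm : ∀ᶠ s in atTop, x s ∈ Ioo (0:ℝ) μ) (hym : ∀ᶠ s in atTop, y s ∈ Ioo (0:ℝ) μ)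
    (hxK : Tendsto (fun s => ∫ θ in (0:ℝ)..(x s), k θ) atTop (𝓝 0))
    (hyK : Tendsto (fun s => ∫ θ in (0:ℝ)..(y s), k θ) atTop (𝓝 0))
    (hratio : Tendsto (fun s => (∫ θ in (0:ℝ)..(y s), k θ) / (∫ θ in (0:ℝ)..(x s), k θ))
      atTop (𝓝 c)) :
    Tendsto (fun s => k (y s) / k (x s)) atTop (𝓝 (c ^ (1 - ℓ))) := by
  set K : ℝ → ℝ := fun s => ∫ θ in (0:ℝ)..s, k θ with hKdef
  have hopen : IsOpen (Ioo (0:ℝ) μ) := isOpen_Ioo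
  have kII : ∀ a b : ℝ, 0 ≤ a → 0 ≤ b → a < μ → b < μ → IntervalIntegrable k volume a b := by
    intro a b ha hb ha' hb'
    rw [intervalIntegrable_iff]
    exact hkint.mono_set (fun w hw =>
      ⟨lt_of_le_of_lt (le_min ha hb) hw.1, lt_of_le_of_lt hw.2 (max_lt ha' hb')⟩)
  have hkcont : ContinuousOn k (Ioo (0:ℝ) μ) := hkC.continuousOn
  have hKpos : ∀ s ∈ Ioo (0:ℝ) μ, 0 < K s := by
    intro s hs
    exact intervalIntegral.intervalIntegral_pos_of_pos_on
      (kII 0 s le_rfl hs.1.le hμ hs.2)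
      (fun w hw => hkpos w ⟨hw.1, hw.2.trans hs.2⟩) hs.1
  have hKd : ∀ s ∈ Ioo (0:ℝ) μ, HasDerivAt K (k s) s := by
    intro s hs
    exact intervalIntegral.integral_hasDerivAt_right (kII 0 s le_rfl hs.1.le hμ hs.2)
      (hkcont.stronglyMeasurableAtFilter hopen s hs)
      (hkcont.continuousAt (hopen.mem_nhds hs))
  have hkd : ∀ s ∈ Ioo (0:ℝ) μ, HasDerivAt k (deriv k s) s := by
    intro s hs
    exact ((hkC.differentiableOn one_ne_zero).differentiableAt (hopen.mem_nhds hs)).hasDerivAt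
  have hk'cont : ContinuousOn (deriv k) (Ioo (0:ℝ) μ) :=
    hkC.continuousOn_deriv_of_isOpen hopen le_rfl
  have hKcont : ContinuousOn K (Ioo (0:ℝ) μ) := fun s hs =>
    ((hKd s hs).continuousAt).continuousWithinAt
  -- η (s) = K s * deriv k s / (k s)^2 tends to 1 - ℓ
  have hIooMem : Ioo (0:ℝ) μ ∈ 𝓝[>] (0:ℝ) := Ioo_mem_nhdsGT_of_mem ⟨le_rfl, hμ⟩
  have hη : Tendsto (fun s => K s * deriv k s / (k s)^2) (𝓝[>] (0:ℝ)) (𝓝 (1 - ℓ)) := by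
    have hcongr : ∀ᶠ s in 𝓝[>] (0:ℝ),
        1 - deriv (fun s => K s / k s) s = K s * deriv k s / (k s)^2 := by
      filter_upwards [hIooMem] with s hs
      have hks := (hkpos s hs).ne'
      have hd : HasDerivAt (fun s => K s / k s)
          ((k s * k s - K s * deriv k s) / (k s)^2) s := (hKd s hs).div (hkd s hs) hks
      rw [hd.deriv]
      field_simp
      ring
    exact (tendsto_const_nhds.sub hder).congr' hcongr
  -- the functions M and D
  set M : ℝ → ℝ := fun w => Real.log (k w) - (1 - ℓ) * Real.log (K w) with hMdef
  set D : ℝ → ℝ := fun w => deriv k w / k w - (1 - ℓ) * (k w / K w) with hDdef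
  have hMd : ∀ w ∈ Ioo (0:ℝ) μ, HasDerivAt M (D w) w := by
    intro w hw
    exact ((hkd w hw).log (hkpos w hw).ne').sub
      (((hKd w hw).log (hKpos w hw).ne').const_mul (1 - ℓ))
  have hDcont : ContinuousOn D (Ioo (0:ℝ) μ) := by
    apply ContinuousOn.sub
    · exact hk'cont.div hkcont (fun w hw => (hkpos w hw).ne')
    · exact ContinuousOn.mul continuousOn_const
        (hkcont.div hKcont (fun w hw => (hKpos w hw).ne'))
  have hkKcont : ContinuousOn (fun w => k w / K w) (Ioo (0:ℝ) μ) :=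
    hkcont.div hKcont (fun w hw => (hKpos w hw).ne')
  -- FTC on subintervals
  have hFTC : ∀ a ∈ Ioo (0:ℝ) μ, ∀ b ∈ Ioo (0:ℝ) μ, a ≤ b →
      (∫ w in a..b, D w) = M b - M a := by
    intro a ha b hb hab
    have hsub : uIcc a b ⊆ Ioo (0:ℝ) μ := by
      rw [uIcc_of_le hab]
      exact Icc_subset_Ioo ha.1 hb.2
    exact intervalIntegral.integral_eq_sub_of_hasDerivAt
      (fun w hw => hMd w (hsub hw)) ((hDcont.mono hsub).intervalIntegrable)
  have hFTClog : ∀ a ∈ Ioo (0:ℝ) μ, ∀ b ∈ Ioo (0:ℝ) μ, a ≤ b →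
      (∫ w in a..b, k w / K w) = Real.log (K b) - Real.log (K a) := by
    intro a ha b hb hab
    have hsub : uIcc a b ⊆ Ioo (0:ℝ) μ := by
      rw [uIcc_of_le hab]
      exact Icc_subset_Ioo ha.1 hb.2
    exact intervalIntegral.integral_eq_sub_of_hasDerivAt
      (fun w hw => by
        have hw' := hsub hw
        simpa using ((hKd w hw').log (hKpos w hw').ne'))
      ((hkKcont.mono hsub).intervalIntegrable)
  have hKmono : ∀ a ∈ Ioo (0:ℝ) μ, ∀ b ∈ Ioo (0:ℝ) μ, a ≤ b → K a ≤ K b := by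
    intro a ha b hb hab
    have h1 : K a + ∫ w in a..b, k w = K b :=
      intervalIntegral.integral_add_adjacent_intervals (kII 0 a le_rfl ha.1.le hμ ha.2)
        (kII a b ha.1.le (ha.1.le.trans hab) ha.2 hb.2)
    have h2 : 0 ≤ ∫ w in a..b, k w :=
      intervalIntegral.integral_nonneg hab
        (fun w hw => (hkpos w ⟨lt_of_lt_of_le ha.1 hw.1, lt_of_le_of_lt hw.2 hb.2⟩).le)
    linarith
  -- eventual smallness of arguments
  have hsmall : ∀ z : ℝ → ℝ, (∀ᶠ s in atTop, z s ∈ Ioo (0:ℝ) μ) →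
      Tendsto (fun s => K (z s)) atTop (𝓝 0) →
      ∀ δ : ℝ, 0 < δ → δ ≤ μ → ∀ᶠ s in atTop, z s ∈ Ioo (0:ℝ) δ := by
    intro z hzm hzK δ hδ hδμ
    have hhalf : δ/2 ∈ Ioo (0:ℝ) μ := ⟨by linarith, by linarith⟩
    have hKh : 0 < K (δ/2) := hKpos _ hhalf
    filter_upwards [hzm, hzK.eventually_lt_const hKh] with s hs1 hs2
    refine ⟨hs1.1, ?_⟩
    by_contra hcon
    push_neg at hcon
    have : K (δ/2) ≤ K (z s) := hKmono _ hhalf _ hs1 (by linarith)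
    linarith
  -- the key estimate, for a ≤ b within (0, δ)
  have hest : ∀ ε : ℝ, 0 < ε → ∃ δ : ℝ, 0 < δ ∧ δ ≤ μ ∧
      ∀ a ∈ Ioo (0:ℝ) δ, ∀ b ∈ Ioo (0:ℝ) δ, a ≤ b →
      |M b - M a| ≤ ε * |Real.log (K b) - Real.log (K a)| := by
    intro ε hε
    rw [Metric.tendsto_nhdsWithin_nhds] at hη
    obtain ⟨δ₀, hδ₀, hδ₀'⟩ := hη ε hε
    refine ⟨min δ₀ μ, lt_min hδ₀ hμ, min_le_right _ _, ?_⟩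
    intro a ha b hb hab
    have hsubμ : Ioo (0:ℝ) (min δ₀ μ) ⊆ Ioo (0:ℝ) μ :=
      Ioo_subset_Ioo le_rfl (min_le_right _ _)
    have haμ := hsubμ ha
    have hbμ := hsubμ hb
    have hIccsub : Icc a b ⊆ Ioo (0:ℝ) (min δ₀ μ) := Icc_subset_Ioo ha.1 hb.2
    have hbound : ∀ w ∈ Icc a b, |D w| ≤ ε * (k w / K w) := by
      intro w hw
      have hwδ := hIccsub hw
      have hwμ := hsubμ hwδ
      have hkw := hkpos w hwμ
      have hKw := hKpos w hwμ
      have hwdist := hδ₀' (show w ∈ Ioi (0:ℝ) from hwδ.1)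
        (by rw [Real.dist_eq, sub_zero, abs_of_pos hwδ.1]; exact hwδ.2.trans_le (min_le_left _ _))
      rw [Real.dist_eq] at hwdist
      have hDeq : D w = (k w / K w) * (K w * deriv k w / (k w)^2 - (1 - ℓ)) := by
        rw [hDdef]
        field_simp
      rw [hDeq, abs_mul, abs_of_pos (div_pos hkw hKw), mul_comm]
      exact mul_le_mul_of_nonneg_right hwdist.le (div_pos hkw hKw).le
    have h1 : |∫ w in a..b, D w| ≤ ∫ w in a..b, |D w| :=
      intervalIntegral.abs_integral_le_integral_abs hab
    have hDint : IntervalIntegrable D volume a b :=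
      ((hDcont.mono (by rw [uIcc_of_le hab]; exact fun w hw => hsubμ (hIccsub hw))).intervalIntegrable)
    have h2 : (∫ w in a..b, |D w|) ≤ ∫ w in a..b, ε * (k w / K w) :=
      intervalIntegral.integral_mono_on hab hDint.abs
        (((hkKcont.mono (by rw [uIcc_of_le hab]; exact fun w hw => hsubμ (hIccsub hw))).intervalIntegrable).const_mul ε)
        hbound
    have h3 : (∫ w in a..b, ε * (k w / K w)) = ε * (Real.log (K b) - Real.log (K a)) := by
      rw [intervalIntegral.integral_const_mul, hFTClog a haμ b hbμ hab]
    have h4 : Real.log (K a) ≤ Real.log (K b) :=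
      Real.log_le_log (hKpos a haμ) (hKmono a haμ b hbμ hab)
    rw [← hFTC a haμ b hbμ hab]
    calc |∫ w in a..b, D w| ≤ ∫ w in a..b, |D w| := h1
      _ ≤ ε * (Real.log (K b) - Real.log (K a)) := by rw [← h3]; exact h2
      _ ≤ ε * |Real.log (K b) - Real.log (K a)| := by
          apply mul_le_mul_of_nonneg_left (le_abs_self _) hε.le
  -- limit of log-ratio of K values
  have hxKpos : ∀ᶠ s in atTop, 0 < K (x s) := by
    filter_upwards [hxm] with s hs using hKpos _ hs
  have hyKpos : ∀ᶠ s in atTop, 0 < K (y s) := by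
    filter_upwards [hym] with s hs using hKpos _ hs
  have T1 : Tendsto (fun s => Real.log (K (y s)) - Real.log (K (x s))) atTop
      (𝓝 (Real.log c)) := by
    have := ((Real.continuousAt_log hc.ne').tendsto).comp hratio
    refine this.congr' ?_
    filter_upwards [hxKpos, hyKpos] with s h1 h2
    exact (Real.log_div h2.ne' h1.ne')
  have T0 : Tendsto (fun s => M (y s) - M (x s)) atTop (𝓝 0) := by
    rw [Metric.tendsto_nhds]
    intro ε₀ hε₀
    have hL : (0:ℝ) < |Real.log c| + 1 := by positivity
    set ε : ℝ := ε₀/(2*(|Real.log c|+1)) with hεdef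
    have hε : 0 < ε := by positivity
    obtain ⟨δ, hδ, hδμ, hkey⟩ := hest ε hε
    have hx' := hsmall x hxm hxK δ hδ hδμ
    have hy' := hsmall y hym hyK δ hδ hδμ
    have hbd : ∀ᶠ s in atTop,
        |Real.log (K (y s)) - Real.log (K (x s))| ≤ |Real.log c| + 1 :=
      (T1.abs.eventually_le_const (by linarith)).mono (fun s hs => hs)
    have hεL : ε * (|Real.log c| + 1) = ε₀ / 2 := by
      rw [hεdef]; field_simp
    filter_upwards [hx', hy', hbd] with s hxs hys hbds
    rw [Real.dist_eq, sub_zero]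
    rcases le_total (x s) (y s) with h | h
    · have h1 := hkey (x s) hxs (y s) hys h
      have h2 : ε * |Real.log (K (y s)) - Real.log (K (x s))| ≤ ε * (|Real.log c| + 1) :=
        mul_le_mul_of_nonneg_left hbds hε.le
      linarith
    · have h1 := hkey (y s) hys (x s) hxs h
      rw [abs_sub_comm (M (x s)) (M (y s)),
        abs_sub_comm (Real.log (K (x s))) (Real.log (K (y s)))] at h1
      have h2 : ε * |Real.log (K (y s)) - Real.log (K (x s))| ≤ ε * (|Real.log c| + 1) :=
        mul_le_mul_of_nonneg_left hbds hε.le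
      linarith
  have Tlog : Tendsto (fun s => Real.log (k (y s)) - Real.log (k (x s))) atTop
      (𝓝 ((1-ℓ) * Real.log c)) := by
    have := T0.add (T1.const_mul (1-ℓ))
    rw [zero_add] at this
    refine this.congr (fun s => ?_)
    rw [hMdef]
    ring
  have := (Real.continuous_exp.tendsto _).comp Tlog
  have heq : Real.exp ((1-ℓ) * Real.log c) = c ^ (1-ℓ) := by
    rw [Real.rpow_def_of_pos hc, mul_comm]
  rw [heq] at this
  refine this.congr' ?_
  filter_upwards [hxm, hym] with s h1 h2
  simp only [Function.comp]
  rw [Real.exp_sub, Real.exp_log (hkpos _ h2), Real.exp_log (hkpos _ h1)]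

/-- Let `k ∈ K_ℓ`, `f ∈ C¹([0,∞)) ∩ RV_ρ` with `f(0) = 0`, `f' > 0` on `(0,∞)`,
`ρ > max{1, p-1, p-1-(p-2)/ℓ}`, `r = (ρ+1)/(ρ+1-p)`, and let `φ` be defined by
`∫_{φ(t)}^∞ (p'F(s))^{-1/p} ds = t` with `F(t) = ∫₀ᵗ f` and `p' = p/(p-1)`.
Here `Kinv` and `φinv` are the inverse functions of `K(s) = ∫₀ˢ k` and `φ`.
Then `s ↦ k(K⁻¹(φ⁻¹(s))) ∈ RV_{(1-ℓ)/(1-r)}` and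
`f*(s) = (k(K⁻¹(φ⁻¹(s))))^p f(s) ∈ RV_q`, where
`q = p(1-ℓ)/(1-r) + ρ = ρ - (ρ-p+1)(1-ℓ)`. -/
theorem fstar_regular_variation (p ℓ μ ρ : ℝ) (hp : 1 < p) (hℓ : 0 < ℓ) (hμ : 0 < μ)
    (k : ℝ → ℝ) (hk : memK ℓ μ k)
    (f : ℝ → ℝ) (hfC : ContDiffOn ℝ 1 f (Ici (0:ℝ))) (hf0 : f 0 = 0)
    (hf' : ∀ u : ℝ, 0 < u → 0 < deriv f u)
    (hRV : IsRV f ρ) (hρ : max 1 (max (p - 1) (p - 1 - (p - 2) / ℓ)) < ρ)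
    (r q : ℝ) (hr : r = (ρ + 1) / (ρ + 1 - p)) (hq : q = ρ - (ρ - p + 1) * (1 - ℓ))
    (F : ℝ → ℝ) (hF : ∀ t, F t = ∫ s in (0:ℝ)..t, f s)
    (φ : ℝ → ℝ) (hφpos : ∀ t : ℝ, 0 < t → 0 < φ t)
    (hφ : ∀ t : ℝ, 0 < t →
      (∫ s in Ioi (φ t), ((p / (p - 1)) * F s) ^ (-(1 / p))) = t)
    (Kinv φinv : ℝ → ℝ)
    (hKinv : ∀ s ∈ Ioo (0:ℝ) μ, Kinv (∫ θ in (0:ℝ)..s, k θ) = s)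
    (hφinv : ∀ t : ℝ, 0 < t → φinv (φ t) = t)
    (hφinv' : ∀ s : ℝ, 0 < s → 0 < φinv s ∧ φ (φinv s) = s)
    (hrange : ∀ᶠ s in atTop, Kinv (φinv s) ∈ Ioo (0:ℝ) μ ∧
      (∫ θ in (0:ℝ)..(Kinv (φinv s)), k θ) = φinv s) :
    p * (1 - ℓ) / (1 - r) + ρ = q ∧
    IsRV (fun s => k (Kinv (φinv s))) ((1 - ℓ) / (1 - r)) ∧
    IsRV (fun s => (k (Kinv (φinv s))) ^ p * f s) q := by
  have hρ1 : 1 < ρ := (le_max_left _ _).trans_lt hρ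
  have hρp : p - 1 < ρ := ((le_max_left _ _).trans (le_max_right _ _)).trans_lt hρ
  have hp0 : 0 < p := by linarith
  have hp1 : 0 < p - 1 := by linarith
  have hρp1 : 0 < ρ + 1 - p := by linarith
  have h1r : 1 - r = -p / (ρ + 1 - p) := by
    rw [hr]
    field_simp
    ring
  have h1rne : 1 - r ≠ 0 := by
    rw [h1r]
    exact div_ne_zero (by linarith) hρp1.ne'
  have part1 : p * (1 - ℓ) / (1 - r) + ρ = q := by
    rw [hq, h1r, div_div_eq_mul_div]
    rw [div_add' _ _ _ (by linarith : -p ≠ 0), div_eq_iff (by linarith : -p ≠ 0)]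
    ring
  -- properties of f
  have hfcont : ContinuousOn f (Ici (0:ℝ)) := hfC.continuousOn
  have hfmono : StrictMonoOn f (Ici (0:ℝ)) := by
    apply strictMonoOn_of_deriv_pos (convex_Ici 0) hfcont
    intro x hx
    rw [interior_Ici] at hx
    exact hf' x hx
  have hfpos : ∀ v : ℝ, 0 < v → 0 < f v := by
    intro v hv
    have := hfmono (self_mem_Ici) (mem_Ici.mpr hv.le) hv
    rwa [hf0] at this
  have hfnn : ∀ v : ℝ, 0 ≤ v → 0 ≤ f v := by
    intro v hv
    rcases eq_or_lt_of_le hv with h | h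
    · rw [← h, hf0]
    · exact (hfpos v h).le
  set Fl : ℝ → ℝ := fun u => ∫ s in (0:ℝ)..u, f s with hFldef
  have hFeq : F = Fl := funext hF
  have hfint : ∀ a b : ℝ, 0 ≤ a → 0 ≤ b → IntervalIntegrable f volume a b := fun a b ha hb =>
    (hfcont.mono (fun x hx => le_trans (le_min ha hb) hx.1)).intervalIntegrable
  have hFlpos : ∀ u : ℝ, 0 < u → 0 < Fl u := fun u hu =>
    intervalIntegral.intervalIntegral_pos_of_pos_on (hfint 0 u le_rfl hu.le)
      (fun x hx => hfpos x hx.1) hu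
  have hFtop : Tendsto Fl atTop atTop := by
    apply tendsto_atTop_mono' atTop (show (fun u => (u-1) * f 1) ≤ᶠ[atTop] Fl from ?_)
    · exact (tendsto_atTop_add_const_right _ (-1) tendsto_id).atTop_mul_const (hfpos 1 one_pos)
    · filter_upwards [eventually_ge_atTop 1] with u hu
      have hsplit : (∫ s in (0:ℝ)..1, f s) + ∫ s in (1:ℝ)..u, f s = Fl u :=
        intervalIntegral.integral_add_adjacent_intervals (hfint 0 1 le_rfl zero_le_one)
          (hfint 1 u zero_le_one (by linarith))
      have h1 : (u - 1) * f 1 ≤ ∫ s in (1:ℝ)..u, f s := by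
        have h2 : (∫ _ in (1:ℝ)..u, f 1) ≤ ∫ s in (1:ℝ)..u, f s :=
          intervalIntegral.integral_mono_on hu intervalIntegrable_const
            (hfint 1 u zero_le_one (by linarith))
            (fun x hx => hfmono.monotoneOn (mem_Ici.mpr zero_le_one)
              (mem_Ici.mpr (by linarith [hx.1])) hx.1)
        simpa using h2
      have h0 : 0 ≤ ∫ s in (0:ℝ)..1, f s :=
        intervalIntegral.integral_nonneg zero_le_one (fun x hx => hfnn x hx.1)
      linarith
  have hKar : ∀ ξ : ℝ, 0 < ξ → Tendsto (fun u => Fl (ξ*u)/Fl u) atTop (𝓝 (ξ^(ρ+1))) :=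
    fun ξ hξ => karamata_direct hfcont hfnn hfpos hRV hξ hFtop
  -- the function g and its tail integral G
  have hc0 : (0:ℝ) < p/(p-1) := div_pos hp0 hp1
  set g : ℝ → ℝ := fun y => ((p/(p-1)) * F y) ^ (-(1/p)) with hgdef
  have hFpos : ∀ y : ℝ, 0 < y → 0 < F y := by
    intro y hy; rw [hFeq]; exact hFlpos y hy
  have hgpos : ∀ y : ℝ, 0 < y → 0 < g y := fun y hy =>
    Real.rpow_pos_of_pos (mul_pos hc0 (hFpos y hy)) _
  set G : ℝ → ℝ := fun s => ∫ y in Ioi s, g y with hGdef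
  have hGinv : ∀ s : ℝ, 0 < s → φinv s = G s := by
    intro s hs
    obtain ⟨h1, h2⟩ := hφinv' s hs
    have h3 := hφ (φinv s) h1
    rw [h2] at h3
    exact h3.symm
  have hGpos : ∀ s : ℝ, 0 < s → 0 < G s := fun s hs => (hGinv s hs) ▸ (hφinv' s hs).1
  have hGint : ∀ s : ℝ, 0 < s → IntegrableOn g (Ioi s) := by
    intro s hs
    by_contra hcon
    have h0 : G s = 0 := integral_undef hcon
    exact (hGpos s hs).ne' h0
  have hFlder : ∀ y : ℝ, 0 < y → HasDerivAt Fl (f y) y := by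
    intro y hy
    exact intervalIntegral.integral_hasDerivAt_right (hfint 0 y le_rfl hy.le)
      ((hfcont.mono Ioi_subset_Ici_self).stronglyMeasurableAtFilter isOpen_Ioi y hy)
      ((hfcont.continuousAt (Ici_mem_nhds hy)))
  have hgcont : ∀ y : ℝ, 0 < y → ContinuousAt g y := by
    intro y hy
    have hFcont : ContinuousAt F y := by
      rw [hFeq]; exact (hFlder y hy).continuousAt
    exact (continuousAt_const.mul hFcont).rpow_const
      (Or.inl (mul_pos hc0 (hFpos y hy)).ne')
  have hgcontOn : ContinuousOn g (Ioi (0:ℝ)) := fun y hy => (hgcont y hy).continuousWithinAt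
  have hsplitG : ∀ a : ℝ, 0 < a → ∀ u : ℝ, a ≤ u → G u = G a - ∫ y in a..u, g y := by
    intro a ha u hu
    have hau : 0 < u := lt_of_lt_of_le ha hu
    have h1 : ∫ y in (Ioc a u ∪ Ioi u), g y = (∫ y in Ioc a u, g y) + ∫ y in Ioi u, g y :=
      setIntegral_union Ioc_disjoint_Ioi_same measurableSet_Ioi
        ((hGint a ha).mono_set Ioc_subset_Ioi_self) (hGint u hau)
    rw [Ioc_union_Ioi_eq_Ioi hu] at h1
    rw [intervalIntegral.integral_of_le hu]
    have : G a = (∫ y in Ioc a u, g y) + G u := h1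
    linarith
  have hGder : ∀ s : ℝ, 1 < s → HasDerivAt G (-(g s)) s := by
    intro s hs
    have hs2 : (1/2:ℝ) < s := by linarith
    have h1 : HasDerivAt (fun u => ∫ y in (1/2:ℝ)..u, g y) (g s) s := by
      apply intervalIntegral.integral_hasDerivAt_right
      · rw [intervalIntegrable_iff]
        exact (hGint (1/2) one_half_pos).mono_set
          (fun w hw => by rw [uIoc_of_le hs2.le] at hw; exact hw.1)
      · exact hgcontOn.stronglyMeasurableAtFilter isOpen_Ioi s (mem_Ioi.mpr (by linarith))
      · exact hgcont s (by linarith)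
    have heq : G =ᶠ[𝓝 s] fun u => G (1/2) - ∫ y in (1/2:ℝ)..u, g y := by
      filter_upwards [eventually_gt_nhds hs2] with u hu
      exact hsplitG (1/2) one_half_pos u hu.le
    have h2 := ((hasDerivAt_const s (G (1/2))).sub h1).congr_of_eventuallyEq heq
    simpa using h2
  have hG0 : Tendsto G atTop (𝓝 0) := by
    have h1 := intervalIntegral_tendsto_integral_Ioi (1:ℝ) (hGint 1 one_pos) tendsto_id
    have h2 : Tendsto (fun u => G 1 - ∫ y in (1:ℝ)..u, g y) atTop (𝓝 (G 1 - G 1)) :=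
      tendsto_const_nhds.sub h1
    rw [sub_self] at h2
    refine h2.congr' ?_
    filter_upwards [eventually_ge_atTop 1] with u hu
    exact (hsplitG 1 one_pos u hu).symm
  have hGRV : ∀ ξ : ℝ, 0 < ξ → Tendsto (fun s => G (ξ*s)/G s) atTop
      (𝓝 (ξ ^ (1-(ρ+1)/p))) := by
    intro ξ hξ
    have hmul : Tendsto (fun s : ℝ => ξ*s) atTop atTop :=
      Tendsto.const_mul_atTop hξ tendsto_id
    have hgr : Tendsto (fun u => g (ξ*u) / g u) atTop (𝓝 ((ξ^(ρ+1)) ^ (-(1/p)))) := by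
      have h2 : Tendsto (fun u => (Fl (ξ*u)/Fl u) ^ (-(1/p))) atTop
          (𝓝 ((ξ^(ρ+1)) ^ (-(1/p)))) :=
        (hKar ξ hξ).rpow_const (Or.inl (Real.rpow_pos_of_pos hξ _).ne')
      refine h2.congr' ?_
      filter_upwards [eventually_gt_atTop 0] with u hu
      have h3 : 0 < Fl u := hFlpos u hu
      have h4 : 0 < Fl (ξ*u) := hFlpos _ (mul_pos hξ hu)
      rw [hgdef]
      simp only
      rw [hFeq, ← Real.div_rpow (mul_pos hc0 h4).le (mul_pos hc0 h3).le,
        mul_div_mul_left _ _ hc0.ne']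
    have hval : ξ * (ξ^(ρ+1)) ^ (-(1/p)) = ξ ^ (1-(ρ+1)/p) := by
      rw [← Real.rpow_mul hξ.le]
      have he : 1 - (ρ+1)/p = 1 + (ρ+1) * (-(1/p)) := by ring
      rw [he, Real.rpow_add hξ, Real.rpow_one]
    have hdiv : Tendsto (fun s => (-(g (ξ*s)) * ξ) / (-(g s))) atTop (𝓝 (ξ ^ (1-(ρ+1)/p))) := by
      rw [← hval]
      have := (hgr.const_mul ξ)
      refine this.congr (fun s => ?_)
      ring
    apply HasDerivAt.lhopital_zero_atTop (f' := fun s => -(g (ξ*s)) * ξ)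
      (g' := fun s => -(g s)) _ _ _ (hG0.comp hmul) hG0 hdiv
    · filter_upwards [eventually_gt_atTop (max (1/ξ) 1)] with s hsm
      rw [max_lt_iff] at hsm
      have hs1 : 1 < ξ * s := by
        have h6 : ξ * (1/ξ) < ξ * s := mul_lt_mul_of_pos_left hsm.1 hξ
        rwa [mul_one_div, div_self hξ.ne'] at h6
      have h5 := HasDerivAt.comp s (hGder (ξ*s) hs1) ((hasDerivAt_id s).const_mul ξ)
      simp only [Function.comp_def, id_eq, mul_one] at h5
      exact h5
    · filter_upwards [eventually_gt_atTop 1] with s hs1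
      exact hGder s hs1
    · filter_upwards [eventually_gt_atTop 1] with s hs1
      exact neg_ne_zero.mpr (hgpos s (by linarith)).ne'
  obtain ⟨hkpos, hkmono, hkCd, hkint, hder⟩ := hk
  have main2 : IsRV (fun s => k (Kinv (φinv s))) ((1 - ℓ) / (1 - r)) := by
    intro ξ hξ
    have hmul : Tendsto (fun s : ℝ => ξ*s) atTop atTop :=
      Tendsto.const_mul_atTop hξ tendsto_id
    set c : ℝ := ξ ^ (1-(ρ+1)/p) with hcdef
    have hc : 0 < c := Real.rpow_pos_of_pos hξ _
    have hrangeξ : ∀ᶠ s in atTop, Kinv (φinv (ξ*s)) ∈ Ioo (0:ℝ) μ ∧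
        (∫ θ in (0:ℝ)..(Kinv (φinv (ξ*s))), k θ) = φinv (ξ*s) := hmul.eventually hrange
    have hxm : ∀ᶠ s in atTop, Kinv (φinv s) ∈ Ioo (0:ℝ) μ := hrange.mono (fun s hs => hs.1)
    have hym : ∀ᶠ s in atTop, Kinv (φinv (ξ*s)) ∈ Ioo (0:ℝ) μ :=
      hrangeξ.mono (fun s hs => hs.1)
    have hGtop : ∀ᶠ s in atTop, φinv s = G s := by
      filter_upwards [eventually_gt_atTop 0] with s hs
      exact hGinv s hs
    have hGtopξ : ∀ᶠ s in atTop, φinv (ξ*s) = G (ξ*s) := by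
      filter_upwards [eventually_gt_atTop 0] with s hs
      exact hGinv _ (mul_pos hξ hs)
    have hxK : Tendsto (fun s => ∫ θ in (0:ℝ)..(Kinv (φinv s)), k θ) atTop (𝓝 0) := by
      apply hG0.congr'
      filter_upwards [hrange, hGtop] with s h1 h2
      exact (h1.2.trans h2).symm
    have hyK : Tendsto (fun s => ∫ θ in (0:ℝ)..(Kinv (φinv (ξ*s))), k θ) atTop (𝓝 0) := by
      apply (hG0.comp hmul).congr'
      filter_upwards [hrangeξ, hGtopξ] with s h1 h2
      exact (h1.2.trans h2).symm
    have hratio : Tendsto (fun s => (∫ θ in (0:ℝ)..(Kinv (φinv (ξ*s))), k θ) /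
        (∫ θ in (0:ℝ)..(Kinv (φinv s)), k θ)) atTop (𝓝 c) := by
      apply (hGRV ξ hξ).congr'
      filter_upwards [hrange, hrangeξ, hGtop, hGtopξ] with s h1 h1ξ h2 h2ξ
      rw [h1.2, h1ξ.2, h2, h2ξ]
    have hmain := k_ratio hμ hkpos hkCd hkint hder hc hxm hym hxK hyK hratio
    have hexp : c ^ (1-ℓ) = ξ ^ ((1-ℓ)/(1-r)) := by
      rw [hcdef, ← Real.rpow_mul hξ.le]
      congr 1
      rw [h1r, div_div_eq_mul_div]
      rw [eq_div_iff (by linarith : -p ≠ 0)]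
      field_simp
      ring
    rw [hexp] at hmain
    exact hmain
  refine ⟨part1, main2, ?_⟩
  intro ξ hξ
  have hmul : Tendsto (fun s : ℝ => ξ*s) atTop atTop :=
    Tendsto.const_mul_atTop hξ tendsto_id
  have h2 := main2 ξ hξ
  have hσpos : (0:ℝ) < ξ ^ ((1-ℓ)/(1-r)) := Real.rpow_pos_of_pos hξ _
  have h3 := h2.rpow_const (p := p) (Or.inl hσpos.ne')
  have h4 := h3.mul (hRV ξ hξ)
  have hval : (ξ^((1-ℓ)/(1-r)))^p * ξ^ρ = ξ^q := by
    rw [← Real.rpow_mul hξ.le, ← Real.rpow_add hξ]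
    congr 1
    rw [← part1]
    ring
  rw [hval] at h4
  refine h4.congr' ?_
  filter_upwards [hrange, hmul.eventually hrange] with s h1 h1ξ
  have ha : 0 < k (Kinv (φinv (ξ*s))) := hkpos _ h1ξ.1
  have hb : 0 < k (Kinv (φinv s)) := hkpos _ h1.1
  rw [Real.div_rpow ha.le hb.le, div_mul_div_comm]
end
end
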